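/- Let Λ be a locally convex row-finite k-graph. The following are equivalent: (1) Λ is aperiodic; (2) Per(Λ) = {0}; (3) there are no distinct μ,ν ∈ Λ with μ ∼_Λ ν. -/

import Mathlib

/-!
Common definitions: higher-rank graphs (`k`-graphs), boundary paths, the
equivalence relation `∼_Λ`, the periodicity group `Per(Λ)`, maximal tails,
hereditary/saturated sets, and (an axiomatization of) the Farthing
desourcification `Λ̄` of a locally convex row-finite `k`-graph `Λ`.
-/

/-- A `k`-graph: a countable small category `Λ` equipped with a degree functor
`d : Λ → ℕ^k` satisfying the factorization property.  Elements of `Path` are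
the morphisms ("paths"); the vertices are the identity morphisms (the paths `v`
with `r v = v`, equivalently of degree `0`).  The composition `comp μ ν` is
only meaningful when `s μ = r ν`. -/
structure KGraph (k : ℕ) where
  Path : Type
  countable_path : Countable Path
  nonempty_path : Nonempty Path
  r : Path → Path
  s : Path → Path
  d : Path → Fin k → ℕ
  comp : Path → Path → Path
  d_r : ∀ μ, d (r μ) = 0
  d_s : ∀ μ, d (s μ) = 0
  r_r : ∀ μ, r (r μ) = r μ
  s_r : ∀ μ, s (r μ) = r μ
  r_s : ∀ μ, r (s μ) = s μ
  s_s : ∀ μ, s (s μ) = s μ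
  comp_id : ∀ μ, comp μ (s μ) = μ
  id_comp : ∀ μ, comp (r μ) μ = μ
  r_comp : ∀ μ ν, s μ = r ν → r (comp μ ν) = r μ
  s_comp : ∀ μ ν, s μ = r ν → s (comp μ ν) = s ν
  d_comp : ∀ μ ν, s μ = r ν → d (comp μ ν) = d μ + d ν
  comp_assoc : ∀ μ ν ρ, s μ = r ν → s ν = r ρ →
    comp (comp μ ν) ρ = comp μ (comp ν ρ)
  factorization : ∀ (lam : Path) (m n : Fin k → ℕ), d lam = m + n →
    ∃! p : Path × Path, d p.1 = m ∧ d p.2 = n ∧ s p.1 = r p.2 ∧ lam = comp p.1 p.2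

namespace KGraph

variable {k : ℕ}

/-- The vertices of a `k`-graph are its identity morphisms. -/
def IsVertex (Λ : KGraph k) (v : Λ.Path) : Prop := Λ.r v = v

/-- `Λ.boundedPaths n` is the set `Λ^{≤ n}`: paths `λ` with `d λ ≤ n` such that
`d(λ)_i < n_i` implies `s(λ)Λ^{e_i} = ∅`. -/
def boundedPaths (Λ : KGraph k) (n : Fin k → ℕ) : Set Λ.Path :=
  {lam | Λ.d lam ≤ n ∧ ∀ i : Fin k, Λ.d lam i < n i →
    ∀ e, Λ.r e = Λ.s lam → Λ.d e ≠ Pi.single i 1}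

/-- `Λ` is row-finite if every `vΛ^n` is finite. -/
def RowFinite (Λ : KGraph k) : Prop :=
  ∀ (v : Λ.Path) (n : Fin k → ℕ), Λ.IsVertex v →
    {lam | Λ.r lam = v ∧ Λ.d lam = n}.Finite

/-- `Λ` is locally convex if for `i ≠ j`, `λ ∈ vΛ^{e_i}` and `μ ∈ vΛ^{e_j}`
one has `s(λ)Λ^{e_j} ≠ ∅` (by symmetry in `i, j` this also gives
`s(μ)Λ^{e_i} ≠ ∅`). -/
def LocallyConvex (Λ : KGraph k) : Prop :=
  ∀ i j : Fin k, i ≠ j → ∀ lam mu : Λ.Path, Λ.r lam = Λ.r mu →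
    Λ.d lam = Pi.single i 1 → Λ.d mu = Pi.single j 1 →
    ∃ lam', Λ.r lam' = Λ.s lam ∧ Λ.d lam' = Pi.single j 1

end KGraph

/-- A boundary path of `Λ`: a degree-preserving functor `x : Ω_{k,m} → Λ`
(`m = deg ∈ (ℕ ∪ {∞})^k`) such that `p ≤ m` and `p_i = m_i` imply
`x(p)Λ^{e_i} = ∅`.  `seg p q` is the path `x(p,q)`, meaningful for
`p ≤ q ≤ deg`; `seg p p` is the vertex `x(p)`. -/
structure BoundaryPath {k : ℕ} (Λ : KGraph k) where
  deg : Fin k → ℕ∞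
  seg : (Fin k → ℕ) → (Fin k → ℕ) → Λ.Path
  seg_d : ∀ p q : Fin k → ℕ, p ≤ q → (∀ i, (q i : ℕ∞) ≤ deg i) →
    Λ.d (seg p q) = q - p
  seg_r : ∀ p q : Fin k → ℕ, p ≤ q → (∀ i, (q i : ℕ∞) ≤ deg i) →
    Λ.r (seg p q) = seg p p
  seg_s : ∀ p q : Fin k → ℕ, p ≤ q → (∀ i, (q i : ℕ∞) ≤ deg i) →
    Λ.s (seg p q) = seg q q
  seg_comp : ∀ p q t : Fin k → ℕ, p ≤ q → q ≤ t → (∀ i, (t i : ℕ∞) ≤ deg i) →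
    Λ.comp (seg p q) (seg q t) = seg p t
  boundary : ∀ p : Fin k → ℕ, (∀ i, (p i : ℕ∞) ≤ deg i) →
    ∀ i : Fin k, (p i : ℕ∞) = deg i →
      ∀ e, Λ.r e = seg p p → Λ.d e ≠ Pi.single i 1

/-- `emin m e` is the coordinatewise minimum `m ∧ e` of `m ∈ ℕ^k` with the
(possibly infinite) degree `e ∈ (ℕ ∪ {∞})^k`, as an element of `ℕ^k`. -/
noncomputable def emin {k : ℕ} (m : Fin k → ℕ) (e : Fin k → ℕ∞) : Fin k → ℕ :=
  fun i => (min ((m i : ℕ∞)) (e i)).toNat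

/-- Equality of boundary paths (of the same degree), as functors. -/
def BPEq {k : ℕ} {Λ : KGraph k} (x y : BoundaryPath Λ) : Prop :=
  x.deg = y.deg ∧ ∀ p q : Fin k → ℕ, p ≤ q → (∀ i, (q i : ℕ∞) ≤ x.deg i) →
    x.seg p q = y.seg p q

/-- `IsExtension Λ lam x y` says that `y = lam · x` is the (unique) boundary
path with `y(0, d lam) = lam` and `y(d lam, d lam + p) = x(0, p)`. -/
def IsExtension {k : ℕ} (Λ : KGraph k) (lam : Λ.Path) (x y : BoundaryPath Λ) :
    Prop :=
  (∀ i, y.deg i = (Λ.d lam i : ℕ∞) + x.deg i) ∧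
  y.seg 0 (Λ.d lam) = lam ∧
  ∀ p : Fin k → ℕ, (∀ i, (p i : ℕ∞) ≤ x.deg i) →
    y.seg (Λ.d lam) (Λ.d lam + p) = x.seg 0 p

/-- The relation `μ ∼_Λ ν`: `s μ = s ν` and `μx = νx` for every boundary path
`x ∈ s(μ)Λ^{≤∞}`. -/
def KGraph.peq {k : ℕ} (Λ : KGraph k) (μ ν : Λ.Path) : Prop :=
  Λ.s μ = Λ.s ν ∧ ∀ x y z : BoundaryPath Λ, x.seg 0 0 = Λ.s μ →
    IsExtension Λ μ x y → IsExtension Λ ν x z → BPEq y z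

/-- `Per(Λ) = {d μ - d ν : μ ∼_Λ ν} ⊆ ℤ^k`. -/
def KGraph.Per {k : ℕ} (Λ : KGraph k) : Set (Fin k → ℤ) :=
  {g | ∃ μ ν : Λ.Path, Λ.peq μ ν ∧ g = fun i => (Λ.d μ i : ℤ) - (Λ.d ν i : ℤ)}

/-- `Λ` is aperiodic if for every vertex `v` there is a boundary path
`x ∈ vΛ^{≤∞}` such that distinct `μ, ν ∈ Λv` have `μx ≠ νx`. -/
def KGraph.Aperiodic {k : ℕ} (Λ : KGraph k) : Prop :=
  ∀ v : Λ.Path, Λ.IsVertex v → ∃ x : BoundaryPath Λ, x.seg 0 0 = v ∧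
    ∀ μ ν : Λ.Path, Λ.s μ = v → Λ.s ν = v → μ ≠ ν →
      ∀ y z : BoundaryPath Λ, IsExtension Λ μ x y → IsExtension Λ ν x z →
        ¬ BPEq y z

/-- A maximal tail: a nonempty set `T` of vertices such that (1) `s λ ∈ T`
implies `r λ ∈ T`; (2) for `v ∈ T` and `n ∈ ℕ^k` there is `λ ∈ vΛ^{≤n}` with
`s λ ∈ T`; (3) any `v, w ∈ T` are connected via `μ ∈ vΛ`, `ν ∈ wΛ` with
`s μ = s ν`. -/
def KGraph.IsMaximalTail {k : ℕ} (Λ : KGraph k) (T : Set Λ.Path) : Prop :=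
  T.Nonempty ∧ (∀ v ∈ T, Λ.IsVertex v) ∧
  (∀ lam : Λ.Path, Λ.s lam ∈ T → Λ.r lam ∈ T) ∧
  (∀ v ∈ T, ∀ n : Fin k → ℕ,
    ∃ lam ∈ Λ.boundedPaths n, Λ.r lam = v ∧ Λ.s lam ∈ T) ∧
  (∀ v ∈ T, ∀ w ∈ T, ∃ μ ν : Λ.Path, Λ.r μ = v ∧ Λ.r ν = w ∧ Λ.s μ = Λ.s ν)

/-- `H_{Per(Λ)}`: the set of vertices `v` such that for all `μ ∈ vΛ` and
`m ∈ ℕ^k` with `d μ - m ∈ Per(Λ)` there exists `ν ∈ vΛ^m` with `μ ∼_Λ ν`. -/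
def KGraph.HPer {k : ℕ} (Λ : KGraph k) : Set Λ.Path :=
  {v | Λ.IsVertex v ∧ ∀ μ : Λ.Path, Λ.r μ = v → ∀ m : Fin k → ℕ,
    (fun i => (Λ.d μ i : ℤ) - (m i : ℤ)) ∈ Λ.Per →
    ∃ ν : Λ.Path, Λ.r ν = v ∧ Λ.d ν = m ∧ Λ.peq μ ν}

/-- A set of vertices `H` is hereditary if `r λ ∈ H` implies `s λ ∈ H`. -/
def KGraph.Hereditary {k : ℕ} (Λ : KGraph k) (H : Set Λ.Path) : Prop :=
  ∀ lam : Λ.Path, Λ.r lam ∈ H → Λ.s lam ∈ H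

/-- A set of vertices `H` is saturated if `s(vΛ^{≤n}) ⊆ H` for some `n ∈ ℕ^k`
implies `v ∈ H`. -/
def KGraph.Saturated {k : ℕ} (Λ : KGraph k) (H : Set Λ.Path) : Prop :=
  ∀ v : Λ.Path, Λ.IsVertex v →
    (∃ n : Fin k → ℕ, ∀ lam ∈ Λ.boundedPaths n, Λ.r lam = v → Λ.s lam ∈ H) →
    v ∈ H

/-- `Σ(H)`: the smallest saturated set containing `H`. -/
def KGraph.SatClosure {k : ℕ} (Λ : KGraph k) (H : Set Λ.Path) : Set Λ.Path :=
  ⋂₀ {S : Set Λ.Path | H ⊆ S ∧ Λ.Saturated S}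

/-- A boundary path `x` is cofinal if every vertex `v` admits `n ≤ d x` with
`vΛx(n) ≠ ∅`. -/
def KGraph.CofinalBP {k : ℕ} (Λ : KGraph k) (x : BoundaryPath Λ) : Prop :=
  ∀ v : Λ.Path, Λ.IsVertex v → ∃ n : Fin k → ℕ,
    (∀ i, (n i : ℕ∞) ≤ x.deg i) ∧ ∃ μ : Λ.Path, Λ.r μ = v ∧ Λ.s μ = x.seg n n

/-- `Λ` is cofinal if all of its boundary paths are cofinal. -/
def KGraph.Cofinal {k : ℕ} (Λ : KGraph k) : Prop :=
  ∀ x : BoundaryPath Λ, Λ.CofinalBP x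

/-- `T(v) = {s μ : μ ∈ vΛ}`, the smallest hereditary set containing `v`. -/
def KGraph.tree {k : ℕ} (Λ : KGraph k) (v : Λ.Path) : Set Λ.Path :=
  {w | ∃ μ : Λ.Path, Λ.r μ = v ∧ Λ.s μ = w}

/-- `Δ(H₁,H₂) = {v ∈ H₁ : T(v) ∩ H₂ = ∅}`. -/
def KGraph.Delta {k : ℕ} (Λ : KGraph k) (H₁ H₂ : Set Λ.Path) : Set Λ.Path :=
  {v ∈ H₁ | Λ.tree v ∩ H₂ = ∅}

/-- `Ω(H₁,H₂) = {v ∈ H₁ \ H₂ : T(v) ∩ H₂ ≠ ∅}`. -/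
def KGraph.Omega {k : ℕ} (Λ : KGraph k) (H₁ H₂ : Set Λ.Path) : Set Λ.Path :=
  {v ∈ H₁ \ H₂ | (Λ.tree v ∩ H₂).Nonempty}

/-- The relation `H₁ ≻ H₂`. -/
def KGraph.Succ {k : ℕ} (Λ : KGraph k) (H₁ H₂ : Set Λ.Path) : Prop :=
  H₂ ⊆ H₁ ∧ (Λ.Delta H₁ H₂).Nonempty ∧
  ∀ v ∈ Λ.Omega H₁ H₂, ∃ n : Fin k → ℕ,
    ∀ lam ∈ Λ.boundedPaths n, Λ.r lam = v → Λ.s lam ∈ H₂ ∪ Λ.Delta H₁ H₂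

/-- `IsGlue Λ x n y p z` says that `z` is the boundary path
`x(0, n ∧ d x) · σ^{p ∧ d y}(y)`. -/
def IsGlue {k : ℕ} (Λ : KGraph k) (x : BoundaryPath Λ) (n : Fin k → ℕ)
    (y : BoundaryPath Λ) (p : Fin k → ℕ) (z : BoundaryPath Λ) : Prop :=
  (∀ i, z.deg i = (emin n x.deg i : ℕ∞) + (y.deg i - (emin p y.deg i : ℕ∞))) ∧
  z.seg 0 (emin n x.deg) = x.seg 0 (emin n x.deg) ∧
  ∀ t : Fin k → ℕ, (∀ i, ((emin p y.deg i + t i : ℕ) : ℕ∞) ≤ y.deg i) →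
    z.seg (emin n x.deg) (emin n x.deg + t) =
      y.seg (emin p y.deg) (emin p y.deg + t)

/-- The Farthing desourcification `Λ̄ = P_Λ/≈` of `Λ`: a `k`-graph `bar`
without sources whose morphisms are the classes `cls x m n = [x;(m,n)]`
(`x ∈ Λ^{≤∞}`, `m ≤ n ∈ ℕ^k`), where `[x;(m,n)] = [y;(p,q)]` iff
(P1) `x(m ∧ d x, n ∧ d x) = y(p ∧ d y, q ∧ d y)`,
(P2) `m - m ∧ d x = p - p ∧ d y` and (P3) `n - m = q - p`; together with the
range, source, degree and composition formulas, the canonical embedding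
`emb : Λ → Λ̄` (`λ ↦ [λx;(0, d λ)]`) and the projection `proj = π : Λ̄ → Λ`,
`π [x;(m,n)] = [x;(m ∧ d x, n ∧ d x)]`. -/
structure Desourcification {k : ℕ} (Λ : KGraph k) where
  bar : KGraph k
  noSources : ∀ v : bar.Path, bar.IsVertex v → ∀ i : Fin k,
    ∃ e, bar.r e = v ∧ bar.d e = Pi.single i 1
  cls : BoundaryPath Λ → (Fin k → ℕ) → (Fin k → ℕ) → bar.Path
  cls_surjective : ∀ μ : bar.Path,
    ∃ (x : BoundaryPath Λ) (m : Fin k → ℕ), μ = cls x m (m + bar.d μ)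
  cls_eq_iff : ∀ (x : BoundaryPath Λ) (m n : Fin k → ℕ) (y : BoundaryPath Λ)
    (p q : Fin k → ℕ), m ≤ n → p ≤ q →
    (cls x m n = cls y p q ↔
      (x.seg (emin m x.deg) (emin n x.deg) =
          y.seg (emin p y.deg) (emin q y.deg) ∧
        m - emin m x.deg = p - emin p y.deg ∧
        n - m = q - p))
  d_cls : ∀ (x : BoundaryPath Λ) (m n : Fin k → ℕ), m ≤ n →
    bar.d (cls x m n) = n - m
  r_cls : ∀ (x : BoundaryPath Λ) (m n : Fin k → ℕ), m ≤ n →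
    bar.r (cls x m n) = cls x m m
  s_cls : ∀ (x : BoundaryPath Λ) (m n : Fin k → ℕ), m ≤ n →
    bar.s (cls x m n) = cls x n n
  comp_cls : ∀ (x y : BoundaryPath Λ) (m n p q : Fin k → ℕ), m ≤ n → p ≤ q →
    bar.s (cls x m n) = bar.r (cls y p q) →
    ∀ z : BoundaryPath Λ, IsGlue Λ x n y p z →
      bar.comp (cls x m n) (cls y p q) = cls z m (n + (q - p))
  emb : Λ.Path → bar.Path
  emb_injective : Function.Injective emb
  emb_r : ∀ lam : Λ.Path, emb (Λ.r lam) = bar.r (emb lam)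
  emb_s : ∀ lam : Λ.Path, emb (Λ.s lam) = bar.s (emb lam)
  emb_d : ∀ lam : Λ.Path, bar.d (emb lam) = Λ.d lam
  emb_comp : ∀ μ ν : Λ.Path, Λ.s μ = Λ.r ν →
    emb (Λ.comp μ ν) = bar.comp (emb μ) (emb ν)
  emb_cls : ∀ (lam : Λ.Path) (x y : BoundaryPath Λ), x.seg 0 0 = Λ.s lam →
    IsExtension Λ lam x y → emb lam = cls y 0 (Λ.d lam)
  proj : bar.Path → Λ.Path
  proj_cls : ∀ (x : BoundaryPath Λ) (m n : Fin k → ℕ), m ≤ n →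
    proj (cls x m n) = x.seg (emin m x.deg) (emin n x.deg)

/-- `IsInfClass D x p z` says that `z` is the infinite path `[x;(p,∞)]` of
`Λ̄`, i.e. `z(m,n) = [x;(p+m, p+n)]`. -/
def IsInfClass {k : ℕ} {Λ : KGraph k} (D : Desourcification Λ)
    (x : BoundaryPath Λ) (p : Fin k → ℕ) (z : BoundaryPath D.bar) : Prop :=
  (∀ i, z.deg i = (⊤ : ℕ∞)) ∧
  ∀ m n : Fin k → ℕ, m ≤ n → z.seg m n = D.cls x (p + m) (p + n)

/-- `IsShift x n y` says that `y = σ^n(x)` is the `n`-shifted boundary path,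
`σ^n(x)(p,q) = x(p+n, q+n)`, of degree `d x - n`. -/
def IsShift {k : ℕ} {Λ : KGraph k} (x : BoundaryPath Λ) (n : Fin k → ℕ)
    (y : BoundaryPath Λ) : Prop :=
  (∀ i, y.deg i = x.deg i - (n i : ℕ∞)) ∧
  ∀ p q : Fin k → ℕ, p ≤ q → (∀ i, (q i : ℕ∞) ≤ y.deg i) →
    y.seg p q = x.seg (p + n) (q + n)

/-! ### Auxiliary development -/

namespace KGraph

attribute [local instance] Classical.propDecidable

variable {k : ℕ}

section Basic

variable (Λ : KGraph k)

lemma vertex_d_zero {v : Λ.Path} (h : Λ.IsVertex v) : Λ.d v = 0 := by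
  conv_lhs => rw [← h]
  exact Λ.d_r v

lemma vertex_s {v : Λ.Path} (h : Λ.IsVertex v) : Λ.s v = v := by
  conv_lhs => rw [← h]
  rw [Λ.s_r, h]

lemma isVertex_s (μ : Λ.Path) : Λ.IsVertex (Λ.s μ) := Λ.r_s μ

lemma isVertex_r (μ : Λ.Path) : Λ.IsVertex (Λ.r μ) := Λ.r_r μ

lemma eq_of_d_zero {μ : Λ.Path} (h : Λ.d μ = 0) : Λ.r μ = μ ∧ Λ.s μ = μ := by
  have hfac := Λ.factorization μ 0 0 (by simp [h])
  have h1 : Λ.d (Λ.r μ) = 0 ∧ Λ.d μ = 0 ∧ Λ.s (Λ.r μ) = Λ.r μ ∧ μ = Λ.comp (Λ.r μ) μ :=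
    ⟨Λ.d_r μ, h, Λ.s_r μ, (Λ.id_comp μ).symm⟩
  have h2 : Λ.d μ = 0 ∧ Λ.d (Λ.s μ) = 0 ∧ Λ.s μ = Λ.r (Λ.s μ) ∧ μ = Λ.comp μ (Λ.s μ) :=
    ⟨h, Λ.d_s μ, (Λ.r_s μ).symm, (Λ.comp_id μ).symm⟩
  have h12 : ((Λ.r μ, μ) : Λ.Path × Λ.Path) = (μ, Λ.s μ) := hfac.unique h1 h2
  have hr : Λ.r μ = μ := congrArg Prod.fst h12
  refine ⟨hr, ?_⟩
  have hs : μ = Λ.s μ := congrArg Prod.snd h12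
  exact hs.symm

/-- Unique factorization, packaged. -/
noncomputable def fc (ρ : Λ.Path) (p : Fin k → ℕ) : Λ.Path × Λ.Path :=
  if h : p ≤ Λ.d ρ then
    (Λ.factorization ρ p (Λ.d ρ - p) (by
      funext i
      have hi : p i ≤ Λ.d ρ i := h i
      simp only [Pi.add_apply, Pi.sub_apply]
      omega)).exists.choose
  else (ρ, ρ)

lemma fc_spec {ρ : Λ.Path} {p : Fin k → ℕ} (h : p ≤ Λ.d ρ) :
    Λ.d (Λ.fc ρ p).1 = p ∧ Λ.d (Λ.fc ρ p).2 = Λ.d ρ - p ∧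
      Λ.s (Λ.fc ρ p).1 = Λ.r (Λ.fc ρ p).2 ∧ ρ = Λ.comp (Λ.fc ρ p).1 (Λ.fc ρ p).2 := by
  rw [fc, dif_pos h]
  exact (Λ.factorization ρ p (Λ.d ρ - p) (by
      funext i
      have hi : p i ≤ Λ.d ρ i := h i
      simp only [Pi.add_apply, Pi.sub_apply]
      omega)).exists.choose_spec

lemma fc_unique {ρ α β : Λ.Path} {p : Fin k → ℕ} (hd : Λ.d α = p)
    (hsr : Λ.s α = Λ.r β) (hc : ρ = Λ.comp α β) : Λ.fc ρ p = (α, β) := by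
  have hdρ : Λ.d ρ = Λ.d α + Λ.d β := by rw [hc]; exact Λ.d_comp α β hsr
  have hle : p ≤ Λ.d ρ := by
    rw [Pi.le_def]
    intro i
    have : Λ.d ρ i = Λ.d α i + Λ.d β i := by rw [hdρ]; rfl
    have hd' : Λ.d α i = p i := congrFun hd i
    omega
  have hβ : Λ.d β = Λ.d ρ - p := by
    funext i
    have := congrFun hdρ i
    have hd' := congrFun hd i
    simp only [Pi.add_apply, Pi.sub_apply] at *
    omega
  have hfac := Λ.factorization ρ p (Λ.d ρ - p) (by
      funext i
      have hi : p i ≤ Λ.d ρ i := hle i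
      simp only [Pi.add_apply, Pi.sub_apply]
      omega)
  have h1 := Λ.fc_spec hle
  exact hfac.unique ⟨h1.1, h1.2.1, h1.2.2.1, h1.2.2.2⟩ ⟨hd, hβ, hsr, hc⟩

lemma fc_zero (ρ : Λ.Path) : Λ.fc ρ 0 = (Λ.r ρ, ρ) :=
  Λ.fc_unique (Λ.d_r ρ) (Λ.s_r ρ) (Λ.id_comp ρ).symm

lemma fc_full (ρ : Λ.Path) : Λ.fc ρ (Λ.d ρ) = (ρ, Λ.s ρ) :=
  Λ.fc_unique rfl (Λ.r_s ρ).symm (Λ.comp_id ρ).symm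

lemma comp_cancel_left {α A B : Λ.Path} (hA : Λ.s α = Λ.r A) (hB : Λ.s α = Λ.r B)
    (h : Λ.comp α A = Λ.comp α B) : A = B := by
  have h1 := Λ.fc_unique (ρ := Λ.comp α A) (p := Λ.d α) rfl hA rfl
  have h2 := Λ.fc_unique (ρ := Λ.comp α B) (p := Λ.d α) rfl hB rfl
  rw [h, h2] at h1
  exact (congrArg Prod.snd h1).symm

/-- Segment of a finite path: `segP ρ p q = ρ(p,q)` for `p ≤ q ≤ d ρ`. -/
noncomputable def segP (ρ : Λ.Path) (p q : Fin k → ℕ) : Λ.Path :=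
  (Λ.fc (Λ.fc ρ q).1 p).2

lemma segP_eq_of {ρ α β γ : Λ.Path} {p q : Fin k → ℕ} (hαβ : Λ.s α = Λ.r β)
    (hβγ : Λ.s β = Λ.r γ) (hρ : ρ = Λ.comp α (Λ.comp β γ)) (hdα : Λ.d α = p)
    (hdβ : Λ.d β = q - p) (hpq : p ≤ q) : Λ.segP ρ p q = β := by
  have hαβ' : Λ.s α = Λ.r (Λ.comp β γ) := by rw [Λ.r_comp β γ hβγ]; exact hαβ
  have hdαβ : Λ.d (Λ.comp α β) = q := by
    rw [Λ.d_comp α β hαβ, hdα, hdβ]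
    funext i
    have hi : p i ≤ q i := hpq i
    simp only [Pi.add_apply, Pi.sub_apply]
    omega
  have hs : Λ.s (Λ.comp α β) = Λ.r γ := by rw [Λ.s_comp α β hαβ]; exact hβγ
  have hρ' : ρ = Λ.comp (Λ.comp α β) γ := by
    rw [hρ, Λ.comp_assoc α β γ hαβ hβγ]
  have h1 : Λ.fc ρ q = (Λ.comp α β, γ) := Λ.fc_unique hdαβ hs hρ'
  rw [segP, h1]
  have h2 : Λ.fc (Λ.comp α β) p = (α, β) := Λ.fc_unique hdα hαβ rfl
  rw [h2]

lemma segP_d {ρ : Λ.Path} {p q : Fin k → ℕ} (hpq : p ≤ q) (hq : q ≤ Λ.d ρ) :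
    Λ.d (Λ.segP ρ p q) = q - p := by
  have h1 := Λ.fc_spec hq
  have h2 : p ≤ Λ.d (Λ.fc ρ q).1 := by rw [h1.1]; exact hpq
  have h3 := Λ.fc_spec h2
  rw [segP]
  rw [h3.2.1, h1.1]

lemma segP_decomp {ρ : Λ.Path} {p q : Fin k → ℕ} (hpq : p ≤ q) (hq : q ≤ Λ.d ρ) :
    ρ = Λ.comp (Λ.segP ρ 0 p) (Λ.comp (Λ.segP ρ p q) (Λ.segP ρ q (Λ.d ρ))) ∧
      Λ.s (Λ.segP ρ 0 p) = Λ.r (Λ.segP ρ p q) ∧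
      Λ.s (Λ.segP ρ p q) = Λ.r (Λ.segP ρ q (Λ.d ρ)) ∧
      Λ.segP ρ 0 p = (Λ.fc ρ p).1 ∧ Λ.segP ρ q (Λ.d ρ) = (Λ.fc ρ q).2 ∧
      Λ.r (Λ.segP ρ 0 p) = Λ.r ρ := by
  obtain ⟨hA1, hA2, hA3, hA4⟩ := Λ.fc_spec hq
  have hpA : p ≤ Λ.d (Λ.fc ρ q).1 := by rw [hA1]; exact hpq
  obtain ⟨hC1, hC2, hC3, hC4⟩ := Λ.fc_spec hpA
  set A := (Λ.fc ρ q).1 with hA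
  set B := (Λ.fc ρ q).2 with hB
  set C := (Λ.fc A p).1 with hC
  set D := (Λ.fc A p).2 with hD
  have hDB : Λ.s D = Λ.r B := by rw [← Λ.s_comp C D hC3, ← hC4]; exact hA3
  have hfcρp : Λ.fc ρ p = (C, Λ.comp D B) := by
    refine Λ.fc_unique hC1 ?_ ?_
    · rw [Λ.r_comp D B hDB]; exact hC3
    · rw [hA4, hC4, Λ.comp_assoc C D B hC3 hDB]
  have hseg : Λ.segP ρ p q = D := rfl
  have hz : Λ.segP ρ 0 p = (Λ.fc ρ p).1 := by rw [segP, Λ.fc_zero]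
  have hz' : Λ.segP ρ 0 p = C := by rw [hz, hfcρp]
  have hy : Λ.segP ρ q (Λ.d ρ) = B := by
    rw [segP, Λ.fc_full]
  refine ⟨?_, ?_, ?_, hz, hy, ?_⟩
  · rw [hz', hseg, hy, ← Λ.comp_assoc C D B hC3 hDB, ← hC4]; exact hA4
  · rw [hz', hseg]; exact hC3
  · rw [hseg, hy]; exact hDB
  · have hrr : Λ.r ρ = Λ.r C := by
      rw [hA4, Λ.r_comp A B hA3, hC4, Λ.r_comp C D hC3]
    rw [hz', hrr]

lemma segP_zero_left {ρ : Λ.Path} {p : Fin k → ℕ} : Λ.segP ρ 0 p = (Λ.fc ρ p).1 := by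
  rw [segP, Λ.fc_zero]

lemma segP_zero_deg (ρ : Λ.Path) : Λ.segP ρ 0 (Λ.d ρ) = ρ := by
  simp only [segP, Λ.fc_full, Λ.fc_zero]

lemma segP_zero_zero (ρ : Λ.Path) : Λ.segP ρ 0 0 = Λ.r ρ := by
  simp only [segP, Λ.fc_zero]

lemma segP_deg_deg (ρ : Λ.Path) : Λ.segP ρ (Λ.d ρ) (Λ.d ρ) = Λ.s ρ := by
  have h1 : Λ.segP ρ (Λ.d ρ) (Λ.d ρ) = (Λ.fc (Λ.fc ρ (Λ.d ρ)).1 (Λ.d ρ)).2 := rfl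
  rw [h1, Λ.fc_full]
  show (Λ.fc ρ (Λ.d ρ)).2 = Λ.s ρ
  rw [Λ.fc_full]

end Basic

end KGraph
namespace KGraph

variable {k : ℕ} (Λ : KGraph k)

lemma pi_zero_le (p : Fin k → ℕ) : (0 : Fin k → ℕ) ≤ p := by
  rw [Pi.le_def]; intro i; simp

lemma segP_d0 {ρ : Λ.Path} {q : Fin k → ℕ} (hq : q ≤ Λ.d ρ) :
    Λ.d (Λ.segP ρ 0 q) = q := by
  rw [Λ.segP_d (pi_zero_le q) hq]
  funext i
  simp

lemma segP_vertex {ρ : Λ.Path} {p : Fin k → ℕ} (hp : p ≤ Λ.d ρ) :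
    Λ.r (Λ.segP ρ p p) = Λ.segP ρ p p ∧ Λ.s (Λ.segP ρ p p) = Λ.segP ρ p p := by
  have hd : Λ.d (Λ.segP ρ p p) = 0 := by
    rw [Λ.segP_d (le_refl p) hp]
    funext i; simp
  exact Λ.eq_of_d_zero hd

lemma segP_r {ρ : Λ.Path} {p q : Fin k → ℕ} (hpq : p ≤ q) (hq : q ≤ Λ.d ρ) :
    Λ.r (Λ.segP ρ p q) = Λ.segP ρ p p := by
  have hp : p ≤ Λ.d ρ := le_trans hpq hq
  have h1 := (Λ.segP_decomp hpq hq).2.1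
  have h2 := (Λ.segP_decomp (le_refl p) hp).2.1
  rw [← h1, h2]
  exact (Λ.segP_vertex hp).1

lemma segP_s {ρ : Λ.Path} {p q : Fin k → ℕ} (hpq : p ≤ q) (hq : q ≤ Λ.d ρ) :
    Λ.s (Λ.segP ρ p q) = Λ.segP ρ q q := by
  have h1 := (Λ.segP_decomp hpq hq).2.2.1
  have h2 := (Λ.segP_decomp (le_refl q) hq).2.2.1
  rw [h1, ← h2]
  exact (Λ.segP_vertex hq).2

lemma segP_comp {ρ : Λ.Path} {p q t : Fin k → ℕ} (hpq : p ≤ q) (hqt : q ≤ t)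
    (ht : t ≤ Λ.d ρ) :
    Λ.comp (Λ.segP ρ p q) (Λ.segP ρ q t) = Λ.segP ρ p t := by
  have hq : q ≤ Λ.d ρ := le_trans hqt ht
  have hp : p ≤ Λ.d ρ := le_trans hpq hq
  obtain ⟨hd1, hs1, hs2, hf1, hf2, hr1⟩ := Λ.segP_decomp hpq hq
  obtain ⟨hd2, hs3, hs4, hf3, hf4, hr2⟩ := Λ.segP_decomp hqt ht
  set Zp := Λ.segP ρ 0 p
  set Zq := Λ.segP ρ 0 q
  set Spq := Λ.segP ρ p q
  set Sqt := Λ.segP ρ q t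
  set Eq' := Λ.segP ρ q (Λ.d ρ)
  set Et := Λ.segP ρ t (Λ.d ρ)
  -- Zq = comp Zp Spq
  have hsSE : Λ.s Spq = Λ.r Eq' := hs2
  have hZq : Zq = Λ.comp Zp Spq := by
    have hfq : Λ.fc ρ q = (Λ.comp Zp Spq, Eq') := by
      refine Λ.fc_unique ?_ ?_ ?_
      · rw [Λ.d_comp Zp Spq hs1, Λ.segP_d0 hp, Λ.segP_d hpq hq]
        funext i
        have h1 : p i ≤ q i := hpq i
        simp only [Pi.add_apply, Pi.sub_apply]
        omega
      · rw [Λ.s_comp Zp Spq hs1]; exact hsSE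
      · rw [Λ.comp_assoc Zp Spq Eq' hs1 hsSE]; exact hd1
    have : Zq = (Λ.fc ρ q).1 := Λ.segP_zero_left
    rw [this, hfq]
  have hSq : Λ.s Spq = Λ.r Sqt := by
    rw [Λ.segP_s hpq hq, ← Λ.segP_r hqt ht]
  have hSEt : Λ.s Sqt = Λ.r Et := hs4
  have hρ' : ρ = Λ.comp Zp (Λ.comp (Λ.comp Spq Sqt) Et) := by
    have a1 : Λ.s Zp = Λ.r (Λ.comp Spq Sqt) := by
      rw [Λ.r_comp Spq Sqt hSq]; exact hs1
    have a2 : Λ.s (Λ.comp Spq Sqt) = Λ.r Et := by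
      rw [Λ.s_comp Spq Sqt hSq]; exact hSEt
    have hzq : Λ.s Zq = Λ.r Sqt := by
      rw [hZq, Λ.s_comp Zp Spq hs1]; exact hSq
    calc ρ = Λ.comp Zq (Λ.comp Sqt Et) := hd2
    _ = Λ.comp (Λ.comp Zp Spq) (Λ.comp Sqt Et) := by rw [← hZq]
    _ = Λ.comp Zp (Λ.comp Spq (Λ.comp Sqt Et)) := by
        rw [Λ.comp_assoc Zp Spq _ hs1]
        rw [Λ.r_comp Sqt Et hSEt]; exact hSq
    _ = Λ.comp Zp (Λ.comp (Λ.comp Spq Sqt) Et) := by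
        rw [Λ.comp_assoc Spq Sqt Et hSq hSEt]
  refine (Λ.segP_eq_of ?_ ?_ hρ' ?_ ?_ (le_trans hpq hqt)).symm
  · rw [Λ.r_comp Spq Sqt hSq]; exact hs1
  · rw [Λ.s_comp Spq Sqt hSq]; exact hSEt
  · exact Λ.segP_d0 hp
  · rw [Λ.d_comp Spq Sqt hSq, Λ.segP_d hpq hq, Λ.segP_d hqt ht]
    funext i
    have h1 : p i ≤ q i := hpq i
    have h2 : q i ≤ t i := hqt i
    simp only [Pi.add_apply, Pi.sub_apply]
    omega

lemma segP_left {ρ α β : Λ.Path} (hsr : Λ.s α = Λ.r β) (hρ : ρ = Λ.comp α β)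
    {p q : Fin k → ℕ} (hpq : p ≤ q) (hq : q ≤ Λ.d α) :
    Λ.segP ρ p q = Λ.segP α p q := by
  obtain ⟨hd1, hs1, hs2, _, _, _⟩ := Λ.segP_decomp hpq hq
  set Z := Λ.segP α 0 p
  set M := Λ.segP α p q
  set E := Λ.segP α q (Λ.d α)
  have hsE : Λ.s E = Λ.r β := by
    have h3 : Λ.s E = Λ.s α := by
      rw [Λ.segP_s hq (le_refl (Λ.d α)), Λ.segP_deg_deg]
    rw [h3]; exact hsr
  have hME : Λ.s M = Λ.r (Λ.comp E β) := by
    rw [Λ.r_comp E β hsE]; exact hs2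
  have hρ' : ρ = Λ.comp Z (Λ.comp M (Λ.comp E β)) := by
    calc ρ = Λ.comp (Λ.comp Z (Λ.comp M E)) β := by rw [← hd1, hρ]
    _ = Λ.comp Z (Λ.comp (Λ.comp M E) β) := by
        rw [Λ.comp_assoc Z (Λ.comp M E) β (by rw [Λ.r_comp M E hs2]; exact hs1)
          (by rw [Λ.s_comp M E hs2]; exact hsE)]
    _ = Λ.comp Z (Λ.comp M (Λ.comp E β)) := by
        rw [Λ.comp_assoc M E β hs2 hsE]
  exact Λ.segP_eq_of hs1 hME hρ' (Λ.segP_d0 (le_trans hpq hq))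
    (Λ.segP_d hpq hq) hpq

lemma segP_right {ρ α β : Λ.Path} (hsr : Λ.s α = Λ.r β) (hρ : ρ = Λ.comp α β)
    {p q : Fin k → ℕ} (hpq : p ≤ q) (hq : q ≤ Λ.d β) :
    Λ.segP ρ (Λ.d α + p) (Λ.d α + q) = Λ.segP β p q := by
  obtain ⟨hd1, hs1, hs2, _, _, hr1⟩ := Λ.segP_decomp hpq hq
  set Z := Λ.segP β 0 p
  set M := Λ.segP β p q
  set E := Λ.segP β q (Λ.d β)
  have hαZ : Λ.s α = Λ.r Z := by rw [hr1]; exact hsr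
  have hρ' : ρ = Λ.comp (Λ.comp α Z) (Λ.comp M E) := by
    calc ρ = Λ.comp α (Λ.comp Z (Λ.comp M E)) := by rw [← hd1, hρ]
    _ = Λ.comp (Λ.comp α Z) (Λ.comp M E) := by
        rw [Λ.comp_assoc α Z (Λ.comp M E) hαZ
          (by rw [Λ.r_comp M E hs2]; exact hs1)]
  refine Λ.segP_eq_of ?_ hs2 hρ' ?_ ?_ ?_
  · rw [Λ.s_comp α Z hαZ]; exact hs1
  · rw [Λ.d_comp α Z hαZ, Λ.segP_d0 (le_trans hpq hq)]
  · rw [Λ.segP_d hpq hq]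
    funext i
    have h1 : p i ≤ q i := hpq i
    simp only [Pi.add_apply, Pi.sub_apply]
    omega
  · rw [Pi.le_def]
    intro i
    simp only [Pi.add_apply]
    exact Nat.add_le_add_left (hpq i) _

/-- `NoEdge Λ v i`: there is no edge of degree `eᵢ` with range `v`. -/
def NoEdge (v : Λ.Path) (i : Fin k) : Prop :=
  ∀ e, Λ.r e = v → Λ.d e ≠ Pi.single i 1

lemma single_le_of_pos {ρ : Λ.Path} {i : Fin k} (h : 0 < Λ.d ρ i) :
    Pi.single i 1 ≤ Λ.d ρ := by
  intro j
  rcases eq_or_ne j i with rfl | hne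
  · simpa using Nat.succ_le_of_lt h
  · simp [Pi.single_apply, hne]

lemma edge_of_d_pos {ρ : Λ.Path} {i : Fin k} (h : 0 < Λ.d ρ i) :
    ∃ e, Λ.r e = Λ.r ρ ∧ Λ.d e = Pi.single i 1 := by
  obtain ⟨h1, h2, h3, h4⟩ := Λ.fc_spec (Λ.single_le_of_pos h)
  refine ⟨(Λ.fc ρ (Pi.single i 1)).1, ?_, h1⟩
  have h5 := Λ.r_comp _ _ h3
  rw [← h5, ← h4]

lemma prop_edge (hlc : Λ.LocallyConvex) {i : Fin k} (τ : Λ.Path)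
    (hzero : Λ.d τ i = 0)
    (hedge : ∃ e, Λ.r e = Λ.r τ ∧ Λ.d e = Pi.single i 1) :
    ∃ e, Λ.r e = Λ.s τ ∧ Λ.d e = Pi.single i 1 := by
  suffices H : ∀ n τ, Finset.univ.sum (Λ.d τ) = n → Λ.d τ i = 0 →
      (∃ e, Λ.r e = Λ.r τ ∧ Λ.d e = Pi.single i 1) →
      ∃ e, Λ.r e = Λ.s τ ∧ Λ.d e = Pi.single i 1 by
    exact H _ τ rfl hzero hedge
  intro n
  induction n using Nat.strong_induction_on with
  | _ n ih =>
    intro τ hsum hz ⟨g, hg1, hg2⟩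
    by_cases h0 : Λ.d τ = 0
    · obtain ⟨hr, hs⟩ := Λ.eq_of_d_zero h0
      exact ⟨g, by rw [hs, ← hr]; exact hg1, hg2⟩
    · have hex : ∃ j, 0 < Λ.d τ j := by
        by_contra hno
        push_neg at hno
        exact h0 (funext fun j => Nat.le_zero.mp (hno j))
      obtain ⟨j, hj⟩ := hex
      have hji : j ≠ i := fun h => by rw [h, hz] at hj; exact Nat.lt_irrefl 0 hj
      obtain ⟨hα1, hα2, hα3, hα4⟩ := Λ.fc_spec (Λ.single_le_of_pos hj)
      set α := (Λ.fc τ (Pi.single j 1)).1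
      set β := (Λ.fc τ (Pi.single j 1)).2
      have hrα : Λ.r α = Λ.r τ := by rw [hα4]; exact (Λ.r_comp α β hα3).symm
      obtain ⟨e', he'1, he'2⟩ := hlc j i hji α g (by rw [hrα, ← hg1]) hα1 hg2
      have hβi : Λ.d β i = 0 := by
        have h6 := congrFun hα2 i
        rw [Pi.sub_apply, Pi.single_eq_of_ne (Ne.symm hji)] at h6
        omega
      have hsless : Finset.univ.sum (Λ.d β) < n := by
        rw [← hsum]
        refine Finset.sum_lt_sum (fun l _ => ?_) ⟨j, Finset.mem_univ j, ?_⟩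
        · have h6 := congrFun hα2 l
          simp only [Pi.sub_apply] at h6
          omega
        · have h6 := congrFun hα2 j
          simp only [Pi.sub_apply, Pi.single_eq_same] at h6
          omega
      obtain ⟨e'', he''1, he''2⟩ := ih _ hsless β rfl hβi
        ⟨e', by rw [he'1]; exact hα3.symm ▸ rfl, he'2⟩
      refine ⟨e'', ?_, he''2⟩
      rw [he''1, hα4, Λ.s_comp α β hα3]
  

lemma exists_bounded (v : Λ.Path) (hv : Λ.IsVertex v) (p : Fin k → ℕ) :
    ∃ τ, τ ∈ Λ.boundedPaths p ∧ Λ.r τ = v := by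
  suffices H : ∀ n (v : Λ.Path), Λ.IsVertex v → ∀ p : Fin k → ℕ,
      Finset.univ.sum p = n → ∃ τ, τ ∈ Λ.boundedPaths p ∧ Λ.r τ = v by
    exact H _ v hv p rfl
  intro n
  induction n using Nat.strong_induction_on with
  | _ n ih =>
    intro v hv p hsum
    by_cases hE : ∃ i, 0 < p i ∧ ∃ e, Λ.r e = v ∧ Λ.d e = Pi.single i 1
    · obtain ⟨i, hpi, e, he1, he2⟩ := hE
      have hless : Finset.univ.sum (p - Pi.single i 1) < n := by
        rw [← hsum]
        refine Finset.sum_lt_sum (fun l _ => ?_) ⟨i, Finset.mem_univ i, ?_⟩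
        · simp only [Pi.sub_apply]; omega
        · simp only [Pi.sub_apply, Pi.single_eq_same]; omega
      obtain ⟨τ', hτ'mem, hτ'r⟩ := ih _ hless (Λ.s e) (Λ.isVertex_s e) _ rfl
      obtain ⟨hτ'le, hτ'bd⟩ := hτ'mem
      have hse : Λ.s e = Λ.r τ' := hτ'r.symm
      refine ⟨Λ.comp e τ', ⟨?_, ?_⟩, ?_⟩
      · rw [Pi.le_def]
        intro j
        have hd := congrFun (Λ.d_comp e τ' hse) j
        have h2 := Pi.le_def.mp hτ'le j
        simp only [Pi.add_apply] at hd
        rw [hd, he2]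
        rcases eq_or_ne j i with rfl | hne
        · have h2' : Λ.d τ' j ≤ p j - 1 := by simpa using h2
          rw [Pi.single_eq_same]
          omega
        · have h2' : Λ.d τ' j ≤ p j := by
            have h0 : (Pi.single i (1:ℕ) : Fin k → ℕ) j = 0 :=
              Pi.single_eq_of_ne hne 1
            simpa [h0] using h2
          rw [Pi.single_eq_of_ne hne]
          omega
      · intro j hj e' he'
        have hd := congrFun (Λ.d_comp e τ' hse) j
        simp only [Pi.add_apply] at hd
        rw [Λ.s_comp e τ' hse] at he'
        apply hτ'bd j ?_ e' he'
        rw [hd, he2] at hj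
        simp only [Pi.sub_apply]
        rcases eq_or_ne j i with rfl | hne
        · rw [Pi.single_eq_same] at hj ⊢; omega
        · rw [Pi.single_eq_of_ne hne] at hj ⊢; omega
      · rw [Λ.r_comp e τ' hse]; exact he1
    · push_neg at hE
      refine ⟨v, ⟨?_, ?_⟩, hv⟩
      · rw [Λ.vertex_d_zero hv]; exact pi_zero_le p
      · intro j hj e' he'
        rw [Λ.vertex_d_zero hv] at hj
        simp only [Pi.zero_apply] at hj
        exact hE j hj e' (by rw [← Λ.vertex_s hv]; exact he')

end KGraph
namespace KGraph

variable {k : ℕ} (Λ : KGraph k)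

attribute [local instance] Classical.propDecidable

/-- A chain of paths, each extending the previous one. -/
def IsChain (f : ℕ → Λ.Path) : Prop :=
  ∀ n, ∃ τ, Λ.s (f n) = Λ.r τ ∧ f (n + 1) = Λ.comp (f n) τ

lemma chain_ext {f : ℕ → Λ.Path} (hf : Λ.IsChain f) {m n : ℕ} (h : m ≤ n) :
    ∃ τ, Λ.s (f m) = Λ.r τ ∧ f n = Λ.comp (f m) τ := by
  induction n, h using Nat.le_induction with
  | base => exact ⟨Λ.s (f m), (Λ.r_s (f m)).symm, (Λ.comp_id (f m)).symm⟩
  | succ n hmn ih =>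
    obtain ⟨τ, h1, h2⟩ := ih
    obtain ⟨τ', h1', h2'⟩ := hf n
    have hττ' : Λ.s τ = Λ.r τ' := by
      rw [← h1']; rw [h2, Λ.s_comp (f m) τ h1]
    refine ⟨Λ.comp τ τ', ?_, ?_⟩
    · rw [Λ.r_comp τ τ' hττ']; exact h1
    · rw [h2', h2, Λ.comp_assoc (f m) τ τ' h1 hττ']
  

lemma chain_d_mono {f : ℕ → Λ.Path} (hf : Λ.IsChain f) {m n : ℕ} (h : m ≤ n) :
    Λ.d (f m) ≤ Λ.d (f n) := by
  obtain ⟨τ, h1, h2⟩ := Λ.chain_ext hf h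
  rw [h2, Λ.d_comp (f m) τ h1, Pi.le_def]
  intro i
  simp only [Pi.add_apply]
  exact Nat.le_add_right _ _

lemma chain_r_const {f : ℕ → Λ.Path} (hf : Λ.IsChain f) (n : ℕ) :
    Λ.r (f n) = Λ.r (f 0) := by
  obtain ⟨τ, h1, h2⟩ := Λ.chain_ext hf (Nat.zero_le n)
  rw [h2, Λ.r_comp (f 0) τ h1]

lemma chain_seg_eq {f : ℕ → Λ.Path} (hf : Λ.IsChain f) {m n : ℕ}
    {p q : Fin k → ℕ} (hmn : m ≤ n) (hpq : p ≤ q) (hq : q ≤ Λ.d (f m)) :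
    Λ.segP (f n) p q = Λ.segP (f m) p q := by
  obtain ⟨τ, h1, h2⟩ := Λ.chain_ext hf hmn
  exact Λ.segP_left h1 h2 hpq hq

/-- The degree of the limit of a chain. -/
noncomputable def chainDeg (f : ℕ → Λ.Path) : Fin k → ℕ∞ :=
  fun i => ⨆ n, (Λ.d (f n) i : ℕ∞)

/-- The segments of the limit of a chain. -/
noncomputable def chainSeg (f : ℕ → Λ.Path) (p q : Fin k → ℕ) : Λ.Path :=
  if h : ∃ n, q ≤ Λ.d (f n) then Λ.segP (f h.choose) p q else f 0

lemma chainSeg_eval (f : ℕ → Λ.Path) (hf : Λ.IsChain f) {p q : Fin k → ℕ}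
    {n : ℕ} (hpq : p ≤ q) (hq : q ≤ Λ.d (f n)) :
    Λ.chainSeg f p q = Λ.segP (f n) p q := by
  have hex : ∃ m, q ≤ Λ.d (f m) := ⟨n, hq⟩
  rw [chainSeg, dif_pos hex]
  have hm : q ≤ Λ.d (f hex.choose) := hex.choose_spec
  rcases le_total hex.choose n with h | h
  · exact (Λ.chain_seg_eq hf h hpq hm).symm
  · exact Λ.chain_seg_eq hf h hpq hq

lemma le_chainDeg (f : ℕ → Λ.Path) (n : ℕ) (i : Fin k) :
    (Λ.d (f n) i : ℕ∞) ≤ Λ.chainDeg f i :=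
  le_iSup (fun n => (Λ.d (f n) i : ℕ∞)) n

lemma chain_exists_ge (f : ℕ → Λ.Path) (hf : Λ.IsChain f) {q : Fin k → ℕ}
    (h : ∀ i, (q i : ℕ∞) ≤ Λ.chainDeg f i) (M : ℕ) :
    ∃ n, M ≤ n ∧ q ≤ Λ.d (f n) := by
  have hco : ∀ i, ∃ n, q i ≤ Λ.d (f n) i := by
    intro i
    by_contra hno
    push_neg at hno
    rcases Nat.eq_zero_or_pos (q i) with h0 | h0
    · exact absurd (h0 ▸ hno 0) (by omega)
    · have hsup : Λ.chainDeg f i ≤ ((q i - 1 : ℕ) : ℕ∞) := by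
        apply iSup_le
        intro n
        have h1 := hno n
        exact Nat.cast_le.mpr (by omega)
      have h2 := le_trans (h i) hsup
      rw [Nat.cast_le] at h2
      omega
  choose N hN using hco
  refine ⟨max M (Finset.univ.sup N), le_max_left _ _, ?_⟩
  rw [Pi.le_def]
  intro i
  have h1 : N i ≤ max M (Finset.univ.sup N) :=
    le_trans (Finset.le_sup (Finset.mem_univ i)) (le_max_right _ _)
  exact le_trans (hN i) (Pi.le_def.mp (Λ.chain_d_mono hf h1) i)

/-- Chains which perform "boundary extension steps" unboundedly often. -/
def ChainHB (f : ℕ → Λ.Path) : Prop :=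
  ∀ M N : ℕ, ∃ n, M ≤ n ∧ ∀ i, Λ.d (f n) i < N → Λ.NoEdge (Λ.s (f n)) i

/-- The boundary path determined by a suitable chain. -/
noncomputable def chainBP (hlc : Λ.LocallyConvex) (f : ℕ → Λ.Path)
    (hf : Λ.IsChain f) (hb : Λ.ChainHB f) : BoundaryPath Λ where
  deg := Λ.chainDeg f
  seg := Λ.chainSeg f
  seg_d := by
    intro p q hpq hq
    obtain ⟨n, _, hn⟩ := Λ.chain_exists_ge f hf hq 0
    rw [Λ.chainSeg_eval f hf hpq hn, Λ.segP_d hpq hn]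
  seg_r := by
    intro p q hpq hq
    obtain ⟨n, _, hn⟩ := Λ.chain_exists_ge f hf hq 0
    have hp : p ≤ Λ.d (f n) := le_trans hpq hn
    rw [Λ.chainSeg_eval f hf hpq hn, Λ.chainSeg_eval f hf (le_refl p) hp,
      Λ.segP_r hpq hn]
  seg_s := by
    intro p q hpq hq
    obtain ⟨n, _, hn⟩ := Λ.chain_exists_ge f hf hq 0
    rw [Λ.chainSeg_eval f hf hpq hn, Λ.chainSeg_eval f hf (le_refl q) hn,
      Λ.segP_s hpq hn]
  seg_comp := by
    intro p q t hpq hqt ht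
    obtain ⟨n, _, hn⟩ := Λ.chain_exists_ge f hf ht 0
    have hq : q ≤ Λ.d (f n) := le_trans hqt hn
    rw [Λ.chainSeg_eval f hf hpq hq, Λ.chainSeg_eval f hf hqt hn,
      Λ.chainSeg_eval f hf (le_trans hpq hqt) hn, Λ.segP_comp hpq hqt hn]
  boundary := by
    intro p hp i hpi e he hde
    obtain ⟨m₀, _, hm₀⟩ := Λ.chain_exists_ge f hf hp 0
    obtain ⟨n, hn1, hn2⟩ := hb m₀ (p i + 1)
    have hmn : p ≤ Λ.d (f n) := le_trans hm₀ (Λ.chain_d_mono hf hn1)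
    have hdi : Λ.d (f n) i = p i := by
      have hle : (Λ.d (f n) i : ℕ∞) ≤ (p i : ℕ∞) := by
        rw [hpi]; exact Λ.le_chainDeg f n i
      rw [Nat.cast_le] at hle
      exact le_antisymm hle (Pi.le_def.mp hmn i)
    have hnoe : Λ.NoEdge (Λ.s (f n)) i := hn2 i (by omega)
    set σ := Λ.segP (f n) p (Λ.d (f n)) with hσ
    have hσd : Λ.d σ i = 0 := by
      rw [hσ, Λ.segP_d hmn (le_refl _), Pi.sub_apply, hdi]
      omega
    have hrσ : Λ.r σ = Λ.chainSeg f p p := by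
      rw [hσ, Λ.segP_r hmn (le_refl _), Λ.chainSeg_eval f hf (le_refl p) hmn]
    have hsσ : Λ.s σ = Λ.s (f n) := by
      rw [hσ, Λ.segP_s hmn (le_refl _), Λ.segP_deg_deg]
    obtain ⟨e'', he''1, he''2⟩ := Λ.prop_edge hlc σ hσd ⟨e, by rw [hrσ]; exact he, hde⟩
    exact hnoe e'' (by rw [← hsσ]; exact he''1) he''2

lemma chainBP_deg (hlc : Λ.LocallyConvex) (f : ℕ → Λ.Path) (hf : Λ.IsChain f)
    (hb : Λ.ChainHB f) : (Λ.chainBP hlc f hf hb).deg = Λ.chainDeg f := rfl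

lemma chainBP_seg (hlc : Λ.LocallyConvex) (f : ℕ → Λ.Path) (hf : Λ.IsChain f)
    (hb : Λ.ChainHB f) {p q : Fin k → ℕ} {n : ℕ} (hpq : p ≤ q)
    (hq : q ≤ Λ.d (f n)) :
    (Λ.chainBP hlc f hf hb).seg p q = Λ.segP (f n) p q :=
  Λ.chainSeg_eval f hf hpq hq

lemma chainBP_seg00 (hlc : Λ.LocallyConvex) (f : ℕ → Λ.Path) (hf : Λ.IsChain f)
    (hb : Λ.ChainHB f) : (Λ.chainBP hlc f hf hb).seg 0 0 = Λ.r (f 0) := by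
  rw [Λ.chainBP_seg hlc f hf hb (le_refl 0) (pi_zero_le _) (n := 0),
    Λ.segP_zero_zero]

end KGraph
namespace KGraph

variable {k : ℕ} {Λ : KGraph k}

attribute [local instance] Classical.propDecidable

lemma enat_eq_top_of_forall {a : ℕ∞} (h : ∀ m : ℕ, (m : ℕ∞) ≤ a) : a = ⊤ := by
  by_contra hne
  lift a to ℕ using hne
  have := h (a + 1)
  rw [Nat.cast_le] at this
  omega

lemma bp_le_deg_of_le (x : BoundaryPath Λ) {p q : Fin k → ℕ} (hpq : p ≤ q)
    (hq : ∀ i, (q i : ℕ∞) ≤ x.deg i) : ∀ i, (p i : ℕ∞) ≤ x.deg i :=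
  fun i => le_trans (Nat.cast_le.mpr (hpq i)) (hq i)

lemma bp_seg_segP (x : BoundaryPath Λ) {p q M : Fin k → ℕ} (hpq : p ≤ q)
    (hqM : q ≤ M) (hM : ∀ i, (M i : ℕ∞) ≤ x.deg i) :
    x.seg p q = Λ.segP (x.seg 0 M) p q := by
  have hqd := bp_le_deg_of_le x hqM hM
  have hpd := bp_le_deg_of_le x hpq hqd
  have h0M : (0 : Fin k → ℕ) ≤ M := pi_zero_le M
  have h0p : (0 : Fin k → ℕ) ≤ p := pi_zero_le p
  have hpM : p ≤ M := le_trans hpq hqM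
  have hs1 : Λ.s (x.seg 0 p) = Λ.r (x.seg p q) := by
    rw [x.seg_s 0 p h0p hpd, x.seg_r p q hpq hqd]
  have hs2 : Λ.s (x.seg p q) = Λ.r (x.seg q M) := by
    rw [x.seg_s p q hpq hqd, x.seg_r q M hqM hM]
  have hcomp : x.seg 0 M = Λ.comp (x.seg 0 p) (Λ.comp (x.seg p q) (x.seg q M)) := by
    rw [x.seg_comp p q M hpq hqM hM, x.seg_comp 0 p M h0p hpM hM]
  refine (Λ.segP_eq_of hs1 hs2 hcomp ?_ (x.seg_d p q hpq hqd) hpq).symm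
  rw [x.seg_d 0 p h0p hpd]
  funext i
  simp

lemma BPEq_of_init {x y : BoundaryPath Λ} (hdeg : x.deg = y.deg)
    (h : ∀ M : Fin k → ℕ, (∀ i, (M i : ℕ∞) ≤ x.deg i) →
      ∃ M', M ≤ M' ∧ (∀ i, (M' i : ℕ∞) ≤ x.deg i) ∧ x.seg 0 M' = y.seg 0 M') :
    BPEq x y := by
  refine ⟨hdeg, fun p q hpq hq => ?_⟩
  obtain ⟨M, hqM, hMd, hM⟩ := h q hq
  have hMd' : ∀ i, (M i : ℕ∞) ≤ y.deg i := by rw [← hdeg]; exact hMd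
  rw [bp_seg_segP x hpq hqM hMd, bp_seg_segP y hpq hqM hMd', hM]

lemma ext_le_deg {lam : Λ.Path} {x y : BoundaryPath Λ}
    (hxy : IsExtension Λ lam x y) {q : Fin k → ℕ}
    (hq : ∀ i, (q i : ℕ∞) ≤ x.deg i) :
    ∀ i, (((Λ.d lam + q) i : ℕ) : ℕ∞) ≤ y.deg i := by
  intro i
  rw [hxy.1 i, Pi.add_apply, Nat.cast_add]
  exact add_le_add le_rfl (hq i)

lemma ext_dlam_le_deg {lam : Λ.Path} {x y : BoundaryPath Λ}
    (hxy : IsExtension Λ lam x y) : ∀ i, ((Λ.d lam i : ℕ) : ℕ∞) ≤ y.deg i := by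
  intro i
  rw [hxy.1 i]
  exact le_add_right (le_refl _)

lemma ext_seg_init {lam : Λ.Path} {x y : BoundaryPath Λ}
    (hxy : IsExtension Λ lam x y) {q : Fin k → ℕ}
    (hq : ∀ i, (q i : ℕ∞) ≤ x.deg i) :
    y.seg 0 (Λ.d lam + q) = Λ.comp lam (x.seg 0 q) := by
  have h1 : Λ.d lam ≤ Λ.d lam + q := by
    rw [Pi.le_def]; intro i; simp only [Pi.add_apply]; exact Nat.le_add_right _ _
  have hc := (y.seg_comp 0 (Λ.d lam) (Λ.d lam + q) (pi_zero_le _) h1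
    (ext_le_deg hxy hq)).symm
  rw [hc, hxy.2.1, hxy.2.2 q hq]

lemma ext_seg_shift {lam : Λ.Path} {x y : BoundaryPath Λ}
    (hxy : IsExtension Λ lam x y) {p q : Fin k → ℕ} (hpq : p ≤ q)
    (hq : ∀ i, (q i : ℕ∞) ≤ x.deg i) :
    y.seg (Λ.d lam + p) (Λ.d lam + q) = x.seg p q := by
  have hp := bp_le_deg_of_le x hpq hq
  have h2 := hxy.2.2 p hp
  have h1 := hxy.2.2 q hq
  have hle1 : Λ.d lam ≤ Λ.d lam + p := by
    rw [Pi.le_def]; intro i; simp only [Pi.add_apply]; exact Nat.le_add_right _ _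
  have hle2 : Λ.d lam + p ≤ Λ.d lam + q := by
    rw [Pi.le_def]; intro i; simp only [Pi.add_apply]
    exact Nat.add_le_add_left (hpq i) _
  have hbd := ext_le_deg hxy hq
  have hbd' := ext_le_deg hxy hp
  have hcomp1 : Λ.comp (y.seg (Λ.d lam) (Λ.d lam + p))
      (y.seg (Λ.d lam + p) (Λ.d lam + q)) = y.seg (Λ.d lam) (Λ.d lam + q) :=
    y.seg_comp _ _ _ hle1 hle2 hbd
  have hcomp2 : Λ.comp (x.seg 0 p) (x.seg p q) = x.seg 0 q :=
    x.seg_comp 0 p q (pi_zero_le p) hpq hq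
  have hs1 : Λ.s (x.seg 0 p) = Λ.r (x.seg p q) := by
    rw [x.seg_s 0 p (pi_zero_le p) hp, x.seg_r p q hpq hq]
  have hs2 : Λ.s (x.seg 0 p) = Λ.r (y.seg (Λ.d lam + p) (Λ.d lam + q)) := by
    rw [y.seg_r _ _ hle2 hbd]
    have hss := congrArg Λ.s h2
    rw [y.seg_s _ _ hle1 hbd'] at hss
    exact hss.symm
  apply Λ.comp_cancel_left hs2 hs1
  rw [h2] at hcomp1
  rw [hcomp1, h1, ← hcomp2]

lemma ext_unique {lam : Λ.Path} {x y z : BoundaryPath Λ}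
    (hxy : IsExtension Λ lam x y) (hxz : IsExtension Λ lam x z) : BPEq y z := by
  have hdeg : y.deg = z.deg := funext fun i => by rw [hxy.1 i, hxz.1 i]
  apply BPEq_of_init hdeg
  intro M hM
  refine ⟨M ⊔ Λ.d lam, le_sup_left, ?_, ?_⟩
  · intro i
    have h1 : ((M ⊔ Λ.d lam) i : ℕ∞) = max ((M i : ℕ∞)) ((Λ.d lam i : ℕ∞)) := by
      simp only [Pi.sup_apply]
      exact Nat.mono_cast.map_max
    rw [h1, max_le_iff]
    exact ⟨hM i, ext_dlam_le_deg hxy i⟩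
  · have hMq : M ⊔ Λ.d lam = Λ.d lam + (M ⊔ Λ.d lam - Λ.d lam) := by
      funext i
      simp only [Pi.add_apply, Pi.sub_apply, Pi.sup_apply]
      omega
    have hq : ∀ i, ((M ⊔ Λ.d lam - Λ.d lam) i : ℕ∞) ≤ x.deg i := by
      intro i
      rcases eq_or_ne (x.deg i) ⊤ with htop | hne
      · rw [htop]; exact le_top
      · have hc : (((x.deg i).toNat : ℕ) : ℕ∞) = x.deg i := ENat.coe_toNat hne
        have h2 := hM i
        rw [hxy.1 i] at h2
        rw [← hc] at h2 ⊢
        rw [← Nat.cast_add, Nat.cast_le] at h2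
        rw [Nat.cast_le]
        simp only [Pi.sub_apply, Pi.sup_apply]
        omega
    rw [hMq, ext_seg_init hxy hq, ext_seg_init hxz hq]

/-- Truncation of `n·(1,…,1)` to below the degree of `x`. -/
noncomputable def btr (x : BoundaryPath Λ) (n : ℕ) : Fin k → ℕ :=
  fun i => ((n : ℕ∞) ⊓ x.deg i).toNat

lemma btr_ne_top (x : BoundaryPath Λ) (n : ℕ) (i : Fin k) :
    (n : ℕ∞) ⊓ x.deg i ≠ ⊤ :=
  fun h => by
    have := le_of_eq h.symm
    exact absurd (le_trans this inf_le_left) (by simp)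

lemma btr_coe (x : BoundaryPath Λ) (n : ℕ) (i : Fin k) :
    (btr x n i : ℕ∞) = (n : ℕ∞) ⊓ x.deg i :=
  ENat.coe_toNat (btr_ne_top x n i)

lemma btr_le_deg (x : BoundaryPath Λ) (n : ℕ) : ∀ i, (btr x n i : ℕ∞) ≤ x.deg i :=
  fun i => le_trans (le_of_eq (btr_coe x n i)) inf_le_right

lemma btr_mono (x : BoundaryPath Λ) {n m : ℕ} (h : n ≤ m) : btr x n ≤ btr x m := by
  rw [Pi.le_def]
  intro i
  apply ENat.toNat_le_toNat _ (btr_ne_top x m i)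
  exact inf_le_inf_right _ (Nat.cast_le.mpr h)

lemma btr_ge (x : BoundaryPath Λ) {p : Fin k → ℕ}
    (hp : ∀ i, (p i : ℕ∞) ≤ x.deg i) {n : ℕ} (hn : ∀ i, p i ≤ n) :
    p ≤ btr x n := by
  rw [Pi.le_def]
  intro i
  have h1 : (p i : ℕ∞) ≤ (n : ℕ∞) ⊓ x.deg i :=
    le_inf (Nat.cast_le.mpr (hn i)) (hp i)
  have h2 := ENat.toNat_le_toNat h1 (btr_ne_top x n i)
  rwa [ENat.toNat_coe] at h2

lemma btr_zero (x : BoundaryPath Λ) : btr x 0 = 0 := by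
  funext i
  simp [btr]

lemma btr_sup (x : BoundaryPath Λ) (i : Fin k) :
    ⨆ n, (btr x n i : ℕ∞) = x.deg i := by
  apply le_antisymm
  · exact iSup_le fun n => btr_le_deg x n i
  · rcases eq_or_ne (x.deg i) ⊤ with htop | hne
    · rw [htop]
      have heq : ∀ n : ℕ, (btr x n i : ℕ∞) = (n : ℕ∞) := by
        intro n
        rw [btr_coe x n i, htop]
        simp
      have : (⨆ n, (btr x n i : ℕ∞)) = ⊤ := by
        apply enat_eq_top_of_forall
        intro m
        rw [← heq m]
        exact le_iSup (fun n => (btr x n i : ℕ∞)) m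
      rw [this]
    · lift x.deg i to ℕ using hne with c hc
      have : (btr x c i : ℕ∞) = (c : ℕ∞) := by
        rw [btr_coe x c i, ← hc]
        simp
      rw [← this]
      exact le_iSup (fun n => (btr x n i : ℕ∞)) c

end KGraph
namespace KGraph

variable {k : ℕ} (Λ : KGraph k)

attribute [local instance] Classical.propDecidable

lemma exists_extension (hlc : Λ.LocallyConvex) (x : BoundaryPath Λ) (μ : Λ.Path)
    (hx0 : x.seg 0 0 = Λ.s μ) : ∃ y, IsExtension Λ μ x y := by
  set f : ℕ → Λ.Path := fun n => Λ.comp μ (x.seg 0 (btr x n)) with hfdef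
  have hr0 : ∀ n, Λ.r (x.seg 0 (btr x n)) = Λ.s μ := by
    intro n
    rw [x.seg_r 0 _ (pi_zero_le _) (btr_le_deg x n), hx0]
  have hsμ : ∀ n, Λ.s μ = Λ.r (x.seg 0 (btr x n)) := fun n => (hr0 n).symm
  have hdf : ∀ n, Λ.d (f n) = Λ.d μ + btr x n := by
    intro n
    simp only [hfdef]
    rw [Λ.d_comp μ _ (hsμ n), x.seg_d 0 _ (pi_zero_le _) (btr_le_deg x n)]
    funext i
    simp
  have hchain : Λ.IsChain f := by
    intro n
    have hmono := btr_mono x (Nat.le_succ n)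
    refine ⟨x.seg (btr x n) (btr x (n + 1)), ?_, ?_⟩
    · simp only [hfdef]
      rw [Λ.s_comp μ _ (hsμ n), x.seg_s 0 _ (pi_zero_le _) (btr_le_deg x n),
        x.seg_r _ _ hmono (btr_le_deg x (n + 1))]
    · simp only [hfdef]
      have h1 : x.seg 0 (btr x (n + 1)) =
          Λ.comp (x.seg 0 (btr x n)) (x.seg (btr x n) (btr x (n + 1))) :=
        (x.seg_comp 0 (btr x n) (btr x (n + 1)) (pi_zero_le _) hmono
          (btr_le_deg x (n + 1))).symm
      have h2 : Λ.s (x.seg 0 (btr x n)) = Λ.r (x.seg (btr x n) (btr x (n + 1))) := by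
        rw [x.seg_s 0 _ (pi_zero_le _) (btr_le_deg x n),
          x.seg_r _ _ hmono (btr_le_deg x (n + 1))]
      rw [h1, Λ.comp_assoc μ _ _ (hsμ n) h2]
  have hhb : Λ.ChainHB f := by
    intro M N
    refine ⟨max M N, le_max_left _ _, ?_⟩
    intro i hi
    set n := max M N with hn
    rcases le_or_gt ((n : ℕ∞)) (x.deg i) with hcase | hcase
    · exfalso
      have hbtr : btr x n i = n := by
        have : ((n : ℕ∞)) ⊓ x.deg i = (n : ℕ∞) := inf_eq_left.mpr hcase
        rw [btr, this, ENat.toNat_coe]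
      rw [hdf n, Pi.add_apply, hbtr] at hi
      have : N ≤ n := le_max_right _ _
      omega
    · have hbtr : (btr x n i : ℕ∞) = x.deg i := by
        rw [btr_coe x n i, inf_eq_right.mpr (le_of_lt hcase)]
      have hsfn : Λ.s (f n) = x.seg (btr x n) (btr x n) := by
        simp only [hfdef]
        rw [Λ.s_comp μ _ (hsμ n), x.seg_s 0 _ (pi_zero_le _) (btr_le_deg x n)]
      intro e he hde
      rw [hsfn] at he
      exact x.boundary (btr x n) (btr_le_deg x n) i hbtr e he hde
  refine ⟨Λ.chainBP hlc f hchain hhb, ?_, ?_, ?_⟩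
  · intro i
    have h1 : (Λ.chainBP hlc f hchain hhb).deg i = ⨆ n, (Λ.d (f n) i : ℕ∞) := rfl
    rw [h1]
    have h2 : ∀ n, (Λ.d (f n) i : ℕ∞) = (Λ.d μ i : ℕ∞) + (btr x n i : ℕ∞) := by
      intro n
      rw [hdf n, Pi.add_apply, Nat.cast_add]
    simp only [h2]
    rw [← ENat.add_iSup, btr_sup x i]
  · have hf0 : f 0 = μ := by
      simp only [hfdef]
      show Λ.comp μ (x.seg 0 (btr x 0)) = μ
      rw [btr_zero x, hx0, Λ.comp_id]
    have hq : Λ.d μ ≤ Λ.d (f 0) := by rw [hf0]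
    rw [Λ.chainBP_seg hlc f hchain hhb (pi_zero_le _) hq, hf0, Λ.segP_zero_deg]
  · intro p hp
    set n := Finset.univ.sup p with hn
    have hpn : ∀ i, p i ≤ n := fun i => Finset.le_sup (Finset.mem_univ i)
    have hpbtr : p ≤ btr x n := btr_ge x hp hpn
    have hple : Λ.d μ ≤ Λ.d μ + p := by
      rw [Pi.le_def]; intro i; simp only [Pi.add_apply]; exact Nat.le_add_right _ _
    have hbound : Λ.d μ + p ≤ Λ.d (f n) := by
      rw [hdf n, Pi.le_def]
      intro i
      simp only [Pi.add_apply]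
      exact Nat.add_le_add_left (hpbtr i) _
    rw [Λ.chainBP_seg hlc f hchain hhb hple hbound]
    have hdseg : Λ.d (x.seg 0 (btr x n)) = btr x n := by
      rw [x.seg_d 0 _ (pi_zero_le _) (btr_le_deg x n)]
      funext i; simp
    have hq2 : p ≤ Λ.d (x.seg 0 (btr x n)) := by rw [hdseg]; exact hpbtr
    have h3 := Λ.segP_right (hsμ n) (rfl : f n = Λ.comp μ (x.seg 0 (btr x n)))
      (pi_zero_le p) hq2
    have h4 : Λ.d μ + 0 = Λ.d μ := by funext i; simp
    rw [h4] at h3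
    rw [h3]
    exact (bp_seg_segP x (pi_zero_le p) hpbtr (btr_le_deg x n)).symm

/-- One boundary-extension step. -/
noncomputable def bstep (ρ : Λ.Path) (n : ℕ) : Λ.Path :=
  (Λ.exists_bounded (Λ.s ρ) (Λ.isVertex_s ρ)
    (fun i => (Finset.univ.sup (Λ.d ρ) + n + 1) - Λ.d ρ i)).choose

lemma bstep_spec (ρ : Λ.Path) (n : ℕ) :
    Λ.bstep ρ n ∈ Λ.boundedPaths
        (fun i => (Finset.univ.sup (Λ.d ρ) + n + 1) - Λ.d ρ i) ∧
      Λ.r (Λ.bstep ρ n) = Λ.s ρ :=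
  (Λ.exists_bounded (Λ.s ρ) (Λ.isVertex_s ρ) _).choose_spec

lemma bstep_noedge (ρ : Λ.Path) (n : ℕ) {N : ℕ} (hN : N ≤ n + 1) :
    ∀ i, Λ.d (Λ.comp ρ (Λ.bstep ρ n)) i < N →
      Λ.NoEdge (Λ.s (Λ.comp ρ (Λ.bstep ρ n))) i := by
  intro i hi
  obtain ⟨⟨hle, hbd⟩, hr⟩ := Λ.bstep_spec ρ n
  have hsr : Λ.s ρ = Λ.r (Λ.bstep ρ n) := hr.symm
  have hd := congrFun (Λ.d_comp ρ (Λ.bstep ρ n) hsr) i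
  simp only [Pi.add_apply] at hd
  rw [hd] at hi
  have hsup : Λ.d ρ i ≤ Finset.univ.sup (Λ.d ρ) := Finset.le_sup (Finset.mem_univ i)
  have hlt : Λ.d (Λ.bstep ρ n) i < (Finset.univ.sup (Λ.d ρ) + n + 1) - Λ.d ρ i := by
    omega
  intro e he
  rw [Λ.s_comp ρ (Λ.bstep ρ n) hsr] at he
  exact hbd i hlt e he

lemma bstep_chain (ρ : Λ.Path) (n : ℕ) :
    Λ.s ρ = Λ.r (Λ.bstep ρ n) := (Λ.bstep_spec ρ n).2.symm

/-- The basic boundary chain from a vertex. -/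
noncomputable def baseF (v : Λ.Path) : ℕ → Λ.Path
  | 0 => v
  | n + 1 => Λ.comp (baseF v n) (Λ.bstep (baseF v n) n)

lemma baseF_eq (v : Λ.Path) (n : ℕ) :
    Λ.baseF v (n + 1) = Λ.comp (Λ.baseF v n) (Λ.bstep (Λ.baseF v n) n) := by
  rw [baseF]

lemma baseF_chain (v : Λ.Path) : Λ.IsChain (Λ.baseF v) := by
  intro n
  exact ⟨Λ.bstep (Λ.baseF v n) n, Λ.bstep_chain _ n, Λ.baseF_eq v n⟩

lemma baseF_hb (v : Λ.Path) : Λ.ChainHB (Λ.baseF v) := by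
  intro M N
  refine ⟨max M N + 1, le_trans (le_max_left _ _) (Nat.le_succ _), ?_⟩
  intro i hi
  rw [Λ.baseF_eq v (max M N)] at hi
  rw [Λ.baseF_eq v (max M N)]
  exact Λ.bstep_noedge (Λ.baseF v (max M N)) (max M N)
    (le_trans (le_max_right _ _) (Nat.le_succ _)) i hi

lemma exists_baseBP (hlc : Λ.LocallyConvex) (v : Λ.Path) (hv : Λ.IsVertex v) :
    ∃ x : BoundaryPath Λ, x.seg 0 0 = v := by
  refine ⟨Λ.chainBP hlc (Λ.baseF v) (Λ.baseF_chain v) (Λ.baseF_hb v), ?_⟩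
  rw [Λ.chainBP_seg00]
  exact hv

end KGraph
namespace KGraph

variable {k : ℕ} (Λ : KGraph k)

attribute [local instance] Classical.propDecidable

lemma peq_refl (μ : Λ.Path) : Λ.peq μ μ :=
  ⟨rfl, fun _ _ _ _ h1 h2 => ext_unique h1 h2⟩

lemma enat_sub_le {m dl : ℕ} {D : ℕ∞} (h : (m : ℕ∞) ≤ (dl : ℕ∞) + D) :
    ((m - dl : ℕ) : ℕ∞) ≤ D := by
  rcases eq_or_ne D ⊤ with htop | hne
  · rw [htop]; exact le_top
  · have hc : ((D.toNat : ℕ) : ℕ∞) = D := ENat.coe_toNat hne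
    rw [← hc] at h ⊢
    rw [← Nat.cast_add, Nat.cast_le] at h
    rw [Nat.cast_le]
    omega

/-- The "agreement" property of a pair `(a, b)` at a path `lam`:
every extension of `lam` looks the same from position `a` and from `b`. -/
def Agree (a b : Fin k → ℕ) (lam : Λ.Path) : Prop :=
  ∀ τ, Λ.s lam = Λ.r τ → ∀ t, a + t ≤ Λ.d (Λ.comp lam τ) →
    b + t ≤ Λ.d (Λ.comp lam τ) →
    Λ.segP (Λ.comp lam τ) a (a + t) = Λ.segP (Λ.comp lam τ) b (b + t)

lemma agree_symm {a b : Fin k → ℕ} {lam : Λ.Path} (h : Λ.Agree a b lam) :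
    Λ.Agree b a lam := fun τ hτ t h1 h2 => (h τ hτ t h2 h1).symm

lemma deg_top_of_agree (hlc : Λ.LocallyConvex) {lam : Λ.Path} {a b : Fin k → ℕ}
    (ha : a ≤ Λ.d lam) (hb : b ≤ Λ.d lam) (agree : Λ.Agree a b lam)
    {w : BoundaryPath Λ} (hw : w.seg 0 0 = Λ.s lam) {i : Fin k}
    (hab : a i < b i) : w.deg i = ⊤ := by
  by_contra hne
  set T : Fin k → ℕ := fun j => ((w.deg i) ⊓ (w.deg j)).toNat with hT
  have hTne : ∀ j, (w.deg i) ⊓ (w.deg j) ≠ ⊤ := by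
    intro j h
    exact hne (eq_top_iff.mpr (le_trans (le_of_eq h.symm) inf_le_left))
  have hTcoe : ∀ j, (T j : ℕ∞) = (w.deg i) ⊓ (w.deg j) := by
    intro j; exact ENat.coe_toNat (hTne j)
  have hTle : ∀ j, (T j : ℕ∞) ≤ w.deg j := by
    intro j; rw [hTcoe j]; exact inf_le_right
  have hTi : (T i : ℕ∞) = w.deg i := by
    rw [hTcoe i]; exact inf_idem _
  have hsρ : Λ.s lam = Λ.r (w.seg 0 T) := by
    rw [w.seg_r 0 T (pi_zero_le T) hTle, hw]
  set ρ := Λ.comp lam (w.seg 0 T) with hρ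
  have hdw : Λ.d (w.seg 0 T) = T := by
    rw [w.seg_d 0 T (pi_zero_le T) hTle]
    funext j; simp
  have hdρ : Λ.d ρ = Λ.d lam + T := by
    rw [hρ, Λ.d_comp lam _ hsρ, hdw]
  set u : Fin k → ℕ := fun l => Λ.d lam l + T l - (a l - b l) with hu
  have huval : ∀ l, u l = Λ.d lam l + T l - (a l - b l) := fun l => rfl
  have hbu : b ≤ u := by
    rw [Pi.le_def]; intro l
    have h1 : a l ≤ Λ.d lam l := ha l
    have h2 : b l ≤ Λ.d lam l := hb l
    have h3 := huval l
    omega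
  set t : Fin k → ℕ := u - b with ht
  have htval : ∀ l, t l = u l - b l := fun l => rfl
  have hbt : b + t = u := by
    funext l
    have h3 : b l ≤ u l := hbu l
    have h4 := htval l
    simp only [Pi.add_apply]
    omega
  have hui : u i = Λ.d lam i + T i := by
    have := huval i
    omega
  have hatle : a + t ≤ Λ.d ρ := by
    rw [hdρ, Pi.le_def]; intro l
    have h1 : a l ≤ Λ.d lam l := ha l
    have h2 : b l ≤ Λ.d lam l := hb l
    have h3 : b l ≤ u l := hbu l
    have h4 := htval l
    have h5 := huval l
    simp only [Pi.add_apply]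
    omega
  have hbtle : b + t ≤ Λ.d ρ := by
    rw [hbt, hdρ, Pi.le_def]; intro l
    have h5 := huval l
    simp only [Pi.add_apply]
    omega
  have E := agree (w.seg 0 T) hsρ t hatle hbtle
  have hata : a ≤ a + t := by
    rw [Pi.le_def]; intro l; simp only [Pi.add_apply]; exact Nat.le_add_right _ _
  have hbtb : b ≤ b + t := by
    rw [Pi.le_def]; intro l; simp only [Pi.add_apply]; exact Nat.le_add_right _ _
  have hvert : Λ.segP ρ (a + t) (a + t) = Λ.segP ρ (b + t) (b + t) := by
    rw [← Λ.segP_s hata hatle, ← Λ.segP_s hbtb hbtle, E]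
  -- an edge of degree eᵢ at ρ(a+t) = ρ(u)
  have hesub : a + t + Pi.single i 1 ≤ Λ.d ρ := by
    rw [hdρ, Pi.le_def]; intro l
    have h1 : a l ≤ Λ.d lam l := ha l
    have h2 : b l ≤ Λ.d lam l := hb l
    have h3 : b l ≤ u l := hbu l
    have h4 := htval l
    have h5 := huval l
    rcases eq_or_ne l i with rfl | hne'
    · simp only [Pi.add_apply, Pi.single_eq_same]
      omega
    · simp only [Pi.add_apply, Pi.single_eq_of_ne hne']
      omega
  have hee : a + t ≤ a + t + Pi.single i 1 := by
    rw [Pi.le_def]; intro l; simp only [Pi.add_apply]; exact Nat.le_add_right _ _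
  set e := Λ.segP ρ (a + t) (a + t + Pi.single i 1) with he
  have hed : Λ.d e = Pi.single i 1 := by
    rw [he, Λ.segP_d hee hesub]
    funext l
    simp only [Pi.sub_apply, Pi.add_apply]
    omega
  have her : Λ.r e = Λ.segP ρ (b + t) (b + t) := by
    rw [he, Λ.segP_r hee hesub, hvert]
  -- push the edge forward to the vertex ρ(u ⊔ d lam)
  have hudle : u ⊔ Λ.d lam ≤ Λ.d ρ := by
    rw [hdρ, Pi.le_def]; intro l
    have h1 : a l ≤ Λ.d lam l := ha l
    have h5 := huval l
    simp only [Pi.sup_apply, Pi.add_apply]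
    omega
  have huud : u ≤ u ⊔ Λ.d lam := le_sup_left
  set σ := Λ.segP ρ u (u ⊔ Λ.d lam) with hσ
  have hσd : Λ.d σ i = 0 := by
    rw [hσ, Λ.segP_d huud hudle, Pi.sub_apply, Pi.sup_apply, hui]
    have h1 : a i ≤ Λ.d lam i := ha i
    omega
  have hσr : Λ.r σ = Λ.segP ρ u u := Λ.segP_r huud hudle
  have hσs : Λ.s σ = Λ.segP ρ (u ⊔ Λ.d lam) (u ⊔ Λ.d lam) := Λ.segP_s huud hudle
  have hubt : Λ.segP ρ u u = Λ.segP ρ (b + t) (b + t) := by rw [hbt]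
  obtain ⟨e'', he''r, he''d⟩ := Λ.prop_edge hlc σ hσd
    ⟨e, by rw [her, hσr, hubt], hed⟩
  -- the vertex ρ(u ⊔ d lam) is a boundary vertex of w in direction i
  set q' := (u ⊔ Λ.d lam) - Λ.d lam with hq'
  have hq'val : ∀ l, q' l = (u l ⊔ Λ.d lam l) - Λ.d lam l := fun l => rfl
  have hq'eq : u ⊔ Λ.d lam = Λ.d lam + q' := by
    funext l
    have h5 := hq'val l
    simp only [Pi.add_apply, Pi.sup_apply]
    omega
  have hq'T : q' ≤ Λ.d (w.seg 0 T) := by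
    rw [hdw, Pi.le_def]; intro l
    have h1 : a l ≤ Λ.d lam l := ha l
    have h4 := huval l
    have h5 := hq'val l
    omega
  have hq'Tle : q' ≤ T := by rw [← hdw]; exact hq'T
  have hvw : Λ.segP ρ (u ⊔ Λ.d lam) (u ⊔ Λ.d lam) = w.seg q' q' := by
    rw [hq'eq]
    rw [Λ.segP_right hsρ hρ (le_refl q') hq'T]
    exact (bp_seg_segP w (le_refl q') hq'Tle hTle).symm
  have hq'le : ∀ j, (q' j : ℕ∞) ≤ w.deg j :=
    fun j => le_trans (Nat.cast_le.mpr (hq'Tle j)) (hTle j)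
  have hq'i : (q' i : ℕ∞) = w.deg i := by
    have h1 : q' i = T i := by
      have h2 : a i ≤ Λ.d lam i := ha i
      have h5 := hq'val i
      omega
    rw [h1, hTi]
  exact w.boundary q' hq'le i hq'i e'' (by rw [← hvw, ← hσs]; exact he''r) he''d

lemma peq_of_agree (hlc : Λ.LocallyConvex) {lam : Λ.Path} {a b : Fin k → ℕ}
    (ha : a ≤ Λ.d lam) (hb : b ≤ Λ.d lam) (agree : Λ.Agree a b lam) :
    Λ.peq (Λ.segP lam a (Λ.d lam)) (Λ.segP lam b (Λ.d lam)) := by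
  have had : a ≤ Λ.d lam := ha
  set μt := Λ.segP lam a (Λ.d lam) with hμt
  set νt := Λ.segP lam b (Λ.d lam) with hνt
  have hsμ : Λ.s μt = Λ.s lam := by
    rw [hμt, Λ.segP_s ha (le_refl _), Λ.segP_deg_deg]
  have hsν : Λ.s νt = Λ.s lam := by
    rw [hνt, Λ.segP_s hb (le_refl _), Λ.segP_deg_deg]
  have hdμ : Λ.d μt = Λ.d lam - a := Λ.segP_d ha (le_refl _)
  have hdν : Λ.d νt = Λ.d lam - b := Λ.segP_d hb (le_refl _)
  refine ⟨by rw [hsμ, hsν], ?_⟩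
  intro w Y Z hw hYe hZe
  have hw' : w.seg 0 0 = Λ.s lam := by rw [hw, hsμ]
  have hdegtop : ∀ i, a i ≠ b i → w.deg i = ⊤ := by
    intro i hne
    rcases lt_or_gt_of_ne hne with h | h
    · exact Λ.deg_top_of_agree hlc ha hb agree hw' h
    · exact Λ.deg_top_of_agree hlc hb ha (Λ.agree_symm agree) hw' h
  have hdeg : Y.deg = Z.deg := by
    funext i
    rw [hYe.1 i, hZe.1 i]
    rcases eq_or_ne (a i) (b i) with heq | hne
    · rw [hdμ, hdν]
      simp only [Pi.sub_apply, heq]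
    · rw [hdegtop i hne]
      simp
  apply BPEq_of_init hdeg
  intro M hM
  set M' := M ⊔ Λ.d μt ⊔ Λ.d νt with hM'
  have hMM' : M ≤ M' := le_trans le_sup_left le_sup_left
  have hμM' : Λ.d μt ≤ M' := le_trans le_sup_right le_sup_left
  have hνM' : Λ.d νt ≤ M' := le_sup_right
  have hM'Y : ∀ i, (M' i : ℕ∞) ≤ Y.deg i := by
    intro i
    have hcast : ((M' i : ℕ) : ℕ∞) =
        max (max ((M i : ℕ∞)) ((Λ.d μt i : ℕ∞))) ((Λ.d νt i : ℕ∞)) := by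
      simp only [hM', Pi.sup_apply]
      rw [Nat.mono_cast.map_max (a := M i ⊔ Λ.d μt i), Nat.mono_cast.map_max]
    rw [hcast, max_le_iff, max_le_iff]
    refine ⟨⟨hM i, ext_dlam_le_deg hYe i⟩, ?_⟩
    rw [hdeg]
    exact ext_dlam_le_deg hZe i
  refine ⟨M', hMM', hM'Y, ?_⟩
  set s1 := M' - Λ.d μt with hs1
  set s2 := M' - Λ.d νt with hs2
  have hs1w : ∀ i, (s1 i : ℕ∞) ≤ w.deg i := by
    intro i
    have h1 := hM'Y i
    rw [hYe.1 i] at h1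
    exact enat_sub_le h1
  have hs2w : ∀ i, (s2 i : ℕ∞) ≤ w.deg i := by
    intro i
    have h1 := hM'Y i
    rw [hdeg, hZe.1 i] at h1
    exact enat_sub_le h1
  set S := s1 ⊔ s2 with hS
  have hSw : ∀ i, (S i : ℕ∞) ≤ w.deg i := by
    intro i
    have hcast : ((S i : ℕ) : ℕ∞) = max ((s1 i : ℕ∞)) ((s2 i : ℕ∞)) := by
      simp only [hS, Pi.sup_apply]
      exact Nat.mono_cast.map_max
    rw [hcast, max_le_iff]
    exact ⟨hs1w i, hs2w i⟩
  have hsρ : Λ.s lam = Λ.r (w.seg 0 S) := by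
    rw [w.seg_r 0 S (pi_zero_le S) hSw, hw']
  set ρS := Λ.comp lam (w.seg 0 S) with hρS
  have hdwS : Λ.d (w.seg 0 S) = S := by
    rw [w.seg_d 0 S (pi_zero_le S) hSw]
    funext j; simp
  have hdρS : Λ.d ρS = Λ.d lam + S := by
    rw [hρS, Λ.d_comp lam _ hsρ, hdwS]
  -- key computation of initial segments
  have hkey : ∀ (c : Fin k → ℕ) (hc : c ≤ Λ.d lam) (sc : Fin k → ℕ),
      sc ≤ S → c + M' = Λ.d lam + sc →
      Λ.comp (Λ.segP lam c (Λ.d lam)) (w.seg 0 sc) = Λ.segP ρS c (c + M') := by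
    intro c hc sc hscS hceq
    have hcd : c ≤ Λ.d lam + S := le_trans hc (by
      rw [Pi.le_def]; intro l; simp only [Pi.add_apply]; exact Nat.le_add_right _ _)
    have hcM' : c ≤ c + M' := by
      rw [Pi.le_def]; intro l; simp only [Pi.add_apply]; exact Nat.le_add_right _ _
    have hdlM : Λ.d lam ≤ c + M' := by
      rw [hceq, Pi.le_def]
      intro l
      simp only [Pi.add_apply]
      exact Nat.le_add_right _ _
    have hcM'd : c + M' ≤ Λ.d ρS := by
      rw [hdρS, hceq, Pi.le_def]
      intro l
      simp only [Pi.add_apply]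
      exact Nat.add_le_add_left (hscS l) _
    have hcdl : c ≤ Λ.d lam := hc
    have h1 : Λ.segP ρS c (c + M') =
        Λ.comp (Λ.segP ρS c (Λ.d lam)) (Λ.segP ρS (Λ.d lam) (c + M')) :=
      (Λ.segP_comp hcdl hdlM hcM'd).symm
    have h2 : Λ.segP ρS c (Λ.d lam) = Λ.segP lam c (Λ.d lam) :=
      Λ.segP_left hsρ hρS hcdl (le_refl _)
    have h3 : Λ.segP ρS (Λ.d lam) (c + M') = w.seg 0 sc := by
      have h4 : Λ.d lam + 0 = Λ.d lam := by funext l; simp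
      have h5 := Λ.segP_right hsρ hρS (pi_zero_le sc) (by rw [hdwS]; exact hscS)
      rw [h4] at h5
      rw [hceq, h5]
      exact (bp_seg_segP w (pi_zero_le sc) hscS hSw).symm
    rw [h1, h2, h3]
  have hs1S : s1 ≤ S := le_sup_left
  have hs2S : s2 ≤ S := le_sup_right
  have haeq : a + M' = Λ.d lam + s1 := by
    funext l
    have h1 : a l ≤ Λ.d lam l := ha l
    have h2 : Λ.d μt l ≤ M' l := hμM' l
    simp only [hs1, Pi.add_apply, Pi.sub_apply, hdμ] at *
    omega
  have hbeq : b + M' = Λ.d lam + s2 := by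
    funext l
    have h1 : b l ≤ Λ.d lam l := hb l
    have h2 : Λ.d νt l ≤ M' l := hνM' l
    simp only [hs2, Pi.add_apply, Pi.sub_apply, hdν] at *
    omega
  have hYM' : Y.seg 0 M' = Λ.segP ρS a (a + M') := by
    have h1 : Λ.d μt + s1 = M' := by
      funext l
      have h2 : Λ.d μt l ≤ M' l := hμM' l
      simp only [hs1, Pi.add_apply, Pi.sub_apply]
      omega
    have h2 := ext_seg_init hYe (q := s1) hs1w
    rw [h1] at h2
    rw [h2, hμt]
    exact hkey a ha s1 hs1S haeq
  have hZM' : Z.seg 0 M' = Λ.segP ρS b (b + M') := by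
    have h1 : Λ.d νt + s2 = M' := by
      funext l
      have h2 : Λ.d νt l ≤ M' l := hνM' l
      simp only [hs2, Pi.add_apply, Pi.sub_apply]
      omega
    have h2 := ext_seg_init hZe (q := s2) hs2w
    rw [h1] at h2
    rw [h2, hνt]
    exact hkey b hb s2 hs2S hbeq
  rw [hYM', hZM']
  apply agree (w.seg 0 S) hsρ M'
  · rw [← hρS, hdρS, haeq, Pi.le_def]
    intro l
    simp only [Pi.add_apply]
    exact Nat.add_le_add_left (hs1S l) _
  · rw [← hρS, hdρS, hbeq, Pi.le_def]
    intro l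
    simp only [Pi.add_apply]
    exact Nat.add_le_add_left (hs2S l) _

end KGraph
namespace KGraph

variable {k : ℕ} (Λ : KGraph k)

attribute [local instance] Classical.propDecidable

/-- `Kill a b ρ`: the path `ρ` witnesses that positions `a` and `b` look
different. -/
def Kill (a b : Fin k → ℕ) (ρ : Λ.Path) : Prop :=
  ∃ t, a + t ≤ Λ.d ρ ∧ b + t ≤ Λ.d ρ ∧
    Λ.segP ρ a (a + t) ≠ Λ.segP ρ b (b + t)

lemma kill_comp {a b : Fin k → ℕ} {ρ τ : Λ.Path} (h : Λ.Kill a b ρ)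
    (hsr : Λ.s ρ = Λ.r τ) : Λ.Kill a b (Λ.comp ρ τ) := by
  obtain ⟨t, h1, h2, h3⟩ := h
  have hd : Λ.d ρ ≤ Λ.d (Λ.comp ρ τ) := by
    rw [Λ.d_comp ρ τ hsr, Pi.le_def]
    intro l
    simp only [Pi.add_apply]
    exact Nat.le_add_right _ _
  have hata : a ≤ a + t := by
    rw [Pi.le_def]; intro l; simp only [Pi.add_apply]; exact Nat.le_add_right _ _
  have hbtb : b ≤ b + t := by
    rw [Pi.le_def]; intro l; simp only [Pi.add_apply]; exact Nat.le_add_right _ _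
  refine ⟨t, le_trans h1 hd, le_trans h2 hd, ?_⟩
  rw [Λ.segP_left hsr rfl hata h1, Λ.segP_left hsr rfl hbtb h2]
  exact h3

/-- Attempt to kill the pair `(a,b)` by extension. -/
noncomputable def stKill (a b : Fin k → ℕ) (ρ : Λ.Path) : Λ.Path :=
  if h : ∃ τ, Λ.s ρ = Λ.r τ ∧ Λ.Kill a b (Λ.comp ρ τ) then Λ.comp ρ h.choose
  else ρ

lemma stKill_ext (a b : Fin k → ℕ) (ρ : Λ.Path) :
    ∃ τ, Λ.s ρ = Λ.r τ ∧ Λ.stKill a b ρ = Λ.comp ρ τ := by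
  rw [stKill]
  split_ifs with h
  · exact ⟨h.choose, h.choose_spec.1, rfl⟩
  · exact ⟨Λ.s ρ, (Λ.r_s _).symm, (Λ.comp_id ρ).symm⟩

lemma stKill_kill (a b : Fin k → ℕ) (ρ : Λ.Path)
    (h : ∃ τ, Λ.s ρ = Λ.r τ ∧ Λ.Kill a b (Λ.comp ρ τ)) :
    Λ.Kill a b (Λ.stKill a b ρ) := by
  rw [stKill, dif_pos h]
  exact h.choose_spec.2

/-- The staged chain used to build an aperiodic boundary path. -/
noncomputable def stF (g : ℕ → (Fin k → ℕ) × (Fin k → ℕ)) (v : Λ.Path) :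
    ℕ → Λ.Path
  | 0 => v
  | n + 1 => Λ.comp (Λ.stKill (g n).1 (g n).2 (stF g v n))
      (Λ.bstep (Λ.stKill (g n).1 (g n).2 (stF g v n)) n)

lemma stF_eq (g : ℕ → (Fin k → ℕ) × (Fin k → ℕ)) (v : Λ.Path) (n : ℕ) :
    Λ.stF g v (n + 1) = Λ.comp (Λ.stKill (g n).1 (g n).2 (Λ.stF g v n))
      (Λ.bstep (Λ.stKill (g n).1 (g n).2 (Λ.stF g v n)) n) := by
  rw [stF]

lemma stF_chain (g : ℕ → (Fin k → ℕ) × (Fin k → ℕ)) (v : Λ.Path) :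
    Λ.IsChain (Λ.stF g v) := by
  intro n
  obtain ⟨τ, h1, h2⟩ := Λ.stKill_ext (g n).1 (g n).2 (Λ.stF g v n)
  set ρ' := Λ.stKill (g n).1 (g n).2 (Λ.stF g v n) with hρ'
  have hsb : Λ.s ρ' = Λ.r (Λ.bstep ρ' n) := Λ.bstep_chain ρ' n
  have hsτ : Λ.s τ = Λ.r (Λ.bstep ρ' n) := by
    rw [← hsb, h2, Λ.s_comp _ τ h1]
  refine ⟨Λ.comp τ (Λ.bstep ρ' n), ?_, ?_⟩
  · rw [Λ.r_comp τ _ hsτ]; exact h1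
  · rw [Λ.stF_eq, ← hρ', ← Λ.comp_assoc (Λ.stF g v n) τ (Λ.bstep ρ' n) h1 hsτ,
      ← h2]

lemma stF_hb (g : ℕ → (Fin k → ℕ) × (Fin k → ℕ)) (v : Λ.Path) :
    Λ.ChainHB (Λ.stF g v) := by
  intro M N
  refine ⟨max M N + 1, le_trans (le_max_left _ _) (Nat.le_succ _), ?_⟩
  intro i hi
  rw [Λ.stF_eq g v (max M N)] at hi
  rw [Λ.stF_eq g v (max M N)]
  exact Λ.bstep_noedge _ (max M N)
    (le_trans (le_max_right _ _) (Nat.le_succ _)) i hi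

lemma zero_mem_Per : (0 : Fin k → ℤ) ∈ Λ.Per := by
  obtain ⟨μ⟩ := Λ.nonempty_path
  exact ⟨μ, μ, Λ.peq_refl μ, by funext i; simp⟩

lemma per_eq_zero_of_rigid (h3 : ∀ μ ν : Λ.Path, Λ.peq μ ν → μ = ν) :
    Λ.Per = {0} := by
  ext g
  constructor
  · rintro ⟨μ, ν, hpeq, rfl⟩
    have heq := h3 μ ν hpeq
    subst heq
    rw [Set.mem_singleton_iff]
    funext i
    simp
  · intro hg
    rw [Set.mem_singleton_iff] at hg
    subst hg
    exact Λ.zero_mem_Per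

lemma rigid_of_per (hlc : Λ.LocallyConvex) (hper : Λ.Per = {0}) :
    ∀ μ ν : Λ.Path, Λ.peq μ ν → μ = ν := by
  intro μ ν hpeq
  have hd : Λ.d μ = Λ.d ν := by
    have hmem : (fun i => ((Λ.d μ i : ℤ) - (Λ.d ν i : ℤ))) ∈ Λ.Per :=
      ⟨μ, ν, hpeq, rfl⟩
    rw [hper, Set.mem_singleton_iff] at hmem
    funext i
    have := congrFun hmem i
    simp only [Pi.zero_apply] at this
    omega
  obtain ⟨x, hx⟩ := Λ.exists_baseBP hlc (Λ.s μ) (Λ.isVertex_s μ)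
  obtain ⟨y, hy⟩ := Λ.exists_extension hlc x μ hx
  obtain ⟨z, hz⟩ := Λ.exists_extension hlc x ν (by rw [hx, hpeq.1])
  have hbp := hpeq.2 x y z hx hy hz
  have h1 : y.seg 0 (Λ.d μ) = μ := hy.2.1
  have h2 : z.seg 0 (Λ.d ν) = ν := hz.2.1
  have hbd : ∀ i, ((Λ.d μ i : ℕ) : ℕ∞) ≤ y.deg i := ext_dlam_le_deg hy
  have h4 := hbp.2 0 (Λ.d μ) (pi_zero_le _) hbd
  rw [h1, hd, h2] at h4
  exact h4

lemma rigid_of_aperiodic (hlc : Λ.LocallyConvex) (hap : Λ.Aperiodic) :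
    ∀ μ ν : Λ.Path, Λ.peq μ ν → μ = ν := by
  intro μ ν hpeq
  by_contra hne
  obtain ⟨x, hx0, hsep⟩ := hap (Λ.s μ) (Λ.isVertex_s μ)
  obtain ⟨y, hy⟩ := Λ.exists_extension hlc x μ hx0
  obtain ⟨z, hz⟩ := Λ.exists_extension hlc x ν (by rw [hx0, hpeq.1])
  exact hsep μ ν rfl hpeq.1.symm hne y z hy hz (hpeq.2 x y z hx0 hy hz)

lemma aperiodic_of_per (hlc : Λ.LocallyConvex) (hper : Λ.Per = {0}) :
    Λ.Aperiodic := by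
  intro v hv
  have : Countable ((Fin k → ℕ) × (Fin k → ℕ)) := inferInstance
  obtain ⟨g, hg⟩ := exists_surjective_nat ((Fin k → ℕ) × (Fin k → ℕ))
  set f := Λ.stF g v with hfdef
  have hfc : Λ.IsChain f := Λ.stF_chain g v
  have hfb : Λ.ChainHB f := Λ.stF_hb g v
  set x := Λ.chainBP hlc f hfc hfb with hx
  have hxdeg : ∀ n i, (Λ.d (f n) i : ℕ∞) ≤ x.deg i := fun n i => Λ.le_chainDeg f n i
  refine ⟨x, ?_, ?_⟩
  · rw [hx, Λ.chainBP_seg00]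
    exact hv
  · intro μ ν hsμ hsν hne y z hy hz hbp
    by_cases hdeq : Λ.d μ = Λ.d ν
    · apply hne
      have h1 : y.seg 0 (Λ.d μ) = μ := hy.2.1
      have h2 : z.seg 0 (Λ.d ν) = ν := hz.2.1
      have hbd : ∀ i, ((Λ.d μ i : ℕ) : ℕ∞) ≤ y.deg i := ext_dlam_le_deg hy
      have h4 := hbp.2 0 (Λ.d μ) (pi_zero_le _) hbd
      rw [h1, hdeq, h2] at h4
      exact h4
    · set a := (Λ.d μ ⊔ Λ.d ν) - Λ.d μ with hadef
      set b := (Λ.d μ ⊔ Λ.d ν) - Λ.d ν with hbdef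
      have haval : ∀ i, a i = (Λ.d μ i ⊔ Λ.d ν i) - Λ.d μ i := fun i => rfl
      have hbval : ∀ i, b i = (Λ.d μ i ⊔ Λ.d ν i) - Λ.d ν i := fun i => rfl
      have hab : a ≠ b := by
        intro h
        apply hdeq
        funext i
        have h1 := congrFun h i
        have h2 := haval i
        have h3 := hbval i
        omega
      have hdegeq : ∀ i, y.deg i = z.deg i := fun i => congrFun hbp.1 i
      have htop : ∀ i, Λ.d μ i ≠ Λ.d ν i → x.deg i = ⊤ := by
        intro i hnei
        by_contra hfin
        have hc : ((x.deg i).toNat : ℕ∞) = x.deg i := ENat.coe_toNat hfin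
        have he := hdegeq i
        rw [hy.1 i, hz.1 i, ← hc, ← Nat.cast_add, ← Nat.cast_add, Nat.cast_inj] at he
        omega
      have hax : ∀ i, (a i : ℕ∞) ≤ x.deg i := by
        intro i
        rcases eq_or_ne (Λ.d μ i) (Λ.d ν i) with heq | hnei
        · have h1 : a i = 0 := by
            have := haval i
            omega
          rw [h1]
          simp
        · rw [htop i hnei]
          exact le_top
      have hbx : ∀ i, (b i : ℕ∞) ≤ x.deg i := by
        intro i
        rcases eq_or_ne (Λ.d μ i) (Λ.d ν i) with heq | hnei
        · have h1 : b i = 0 := by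
            have := hbval i
            omega
          rw [h1]
          simp
        · rw [htop i hnei]
          exact le_top
      have hc0a : Λ.d μ + a = Λ.d μ ⊔ Λ.d ν := by
        funext i
        have h2 := haval i
        simp only [Pi.add_apply, Pi.sup_apply]
        omega
      have hc0b : Λ.d ν + b = Λ.d μ ⊔ Λ.d ν := by
        funext i
        have h2 := hbval i
        simp only [Pi.add_apply, Pi.sup_apply]
        omega
      obtain ⟨n, hn⟩ := hg (a, b)
      have hga : (g n).1 = a := by rw [hn]
      have hgb : (g n).2 = b := by rw [hn]
      by_cases hkill : ∃ τ, Λ.s (f n) = Λ.r τ ∧ Λ.Kill a b (Λ.comp (f n) τ)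
      · -- the pair was killed at stage n
        have hk1 : Λ.Kill a b (Λ.stKill a b (f n)) := Λ.stKill_kill a b (f n) hkill
        have hk2 : Λ.Kill a b (f (n + 1)) := by
          have heqf : f (n + 1) = Λ.comp (Λ.stKill a b (f n))
              (Λ.bstep (Λ.stKill a b (f n)) n) := by
            rw [hfdef, Λ.stF_eq g v n, hga, hgb]
          rw [heqf]
          exact Λ.kill_comp hk1 (Λ.bstep_chain _ n)
        obtain ⟨t, ht1, ht2, ht3⟩ := hk2
        have hata : a ≤ a + t := by
          rw [Pi.le_def]; intro l; simp only [Pi.add_apply]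
          exact Nat.le_add_right _ _
        have hbtb : b ≤ b + t := by
          rw [Pi.le_def]; intro l; simp only [Pi.add_apply]
          exact Nat.le_add_right _ _
        have hxa : x.seg a (a + t) = Λ.segP (f (n + 1)) a (a + t) :=
          Λ.chainBP_seg hlc f hfc hfb hata ht1
        have hxb : x.seg b (b + t) = Λ.segP (f (n + 1)) b (b + t) :=
          Λ.chainBP_seg hlc f hfc hfb hbtb ht2
        have hatx : ∀ i, (((a + t) i : ℕ) : ℕ∞) ≤ x.deg i :=
          fun i => le_trans (Nat.cast_le.mpr (ht1 i)) (hxdeg (n + 1) i)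
        have hbtx : ∀ i, (((b + t) i : ℕ) : ℕ∞) ≤ x.deg i :=
          fun i => le_trans (Nat.cast_le.mpr (ht2 i)) (hxdeg (n + 1) i)
        have hya := ext_seg_shift hy hata hatx
        have hzb := ext_seg_shift hz hbtb hbtx
        have hya' : Λ.d μ + (a + t) = (Λ.d μ ⊔ Λ.d ν) + t := by
          rw [← hc0a, add_assoc]
        have hzb' : Λ.d ν + (b + t) = (Λ.d μ ⊔ Λ.d ν) + t := by
          rw [← hc0b, add_assoc]
        rw [hc0a] at hya
        rw [hya'] at hya
        rw [hc0b] at hzb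
        rw [hzb'] at hzb
        have hc0le : Λ.d μ ⊔ Λ.d ν ≤ (Λ.d μ ⊔ Λ.d ν) + t := by
          rw [Pi.le_def]; intro l; simp only [Pi.add_apply]
          exact Nat.le_add_right _ _
        have hc0bd : ∀ i, ((((Λ.d μ ⊔ Λ.d ν) + t) i : ℕ) : ℕ∞) ≤ y.deg i := by
          intro i
          rw [hy.1 i]
          have h1 : ((Λ.d μ ⊔ Λ.d ν) + t) i = Λ.d μ i + (a + t) i := by
            have := congrFun hya' i
            exact (congrFun hya' i).symm ▸ rfl
          rw [← hya', Pi.add_apply, Nat.cast_add]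
          exact add_le_add le_rfl (hatx i)
        have h5 := hbp.2 (Λ.d μ ⊔ Λ.d ν) ((Λ.d μ ⊔ Λ.d ν) + t) hc0le hc0bd
        rw [hya, hzb] at h5
        rw [hxa, hxb] at h5
        exact ht3 h5
      · -- no kill was possible at stage n: extract an element of Per
        have hnk : ∀ τ, Λ.s (f n) = Λ.r τ → ¬ Λ.Kill a b (Λ.comp (f n) τ) := by
          intro τ hτ hkτ
          exact hkill ⟨τ, hτ, hkτ⟩
        have habx : ∀ i, (((a ⊔ b) i : ℕ) : ℕ∞) ≤ Λ.chainDeg f i := by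
          intro i
          have hcast : (((a ⊔ b) i : ℕ) : ℕ∞) = max ((a i : ℕ∞)) ((b i : ℕ∞)) := by
            simp only [Pi.sup_apply]
            exact Nat.mono_cast.map_max
          rw [hcast, max_le_iff]
          exact ⟨hax i, hbx i⟩
        obtain ⟨m, hmn, hm⟩ := Λ.chain_exists_ge f hfc habx n
        have ha' : a ≤ Λ.d (f m) := le_trans le_sup_left hm
        have hb' : b ≤ Λ.d (f m) := le_trans le_sup_right hm
        obtain ⟨κ, hκ1, hκ2⟩ := Λ.chain_ext hfc hmn
        have hagree : Λ.Agree a b (f m) := by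
          intro τ hτ t h1 h2
          by_contra hnee
          have hκτ : Λ.s κ = Λ.r τ := by
            rw [← hτ, hκ2, Λ.s_comp _ κ hκ1]
          have heqc : Λ.comp (f m) τ = Λ.comp (f n) (Λ.comp κ τ) := by
            rw [hκ2, Λ.comp_assoc _ κ τ hκ1 hκτ]
          apply hnk (Λ.comp κ τ) (by rw [Λ.r_comp κ τ hκτ]; exact hκ1)
          rw [← heqc]
          exact ⟨t, h1, h2, hnee⟩
        have hpeq2 := Λ.peq_of_agree hlc ha' hb' hagree
        have hmem : (fun i => ((Λ.d (Λ.segP (f m) a (Λ.d (f m))) i : ℤ) -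
            (Λ.d (Λ.segP (f m) b (Λ.d (f m))) i : ℤ))) ∈ Λ.Per :=
          ⟨_, _, hpeq2, rfl⟩
        rw [hper, Set.mem_singleton_iff] at hmem
        obtain ⟨i, hi⟩ := Function.ne_iff.mp hab
        apply hi
        have h6 := congrFun hmem i
        rw [Λ.segP_d ha' (le_refl _), Λ.segP_d hb' (le_refl _)] at h6
        simp only [Pi.sub_apply, Pi.zero_apply] at h6
        have h7 : a i ≤ Λ.d (f m) i := ha' i
        have h8 : b i ≤ Λ.d (f m) i := hb' i
        omega

end KGraph


/-- Proposition 3.3: For a locally convex row-finite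
`k`-graph `Λ`, the following are equivalent: (1) `Λ` is aperiodic;
(2) `Per(Λ) = {0}`; (3) there are no distinct `μ, ν ∈ Λ` with `μ ∼_Λ ν`. -/
theorem statement1 {k : ℕ} (Λ : KGraph k) (hlc : Λ.LocallyConvex)
    (hrf : Λ.RowFinite) :
    (Λ.Aperiodic ↔ Λ.Per = {0}) ∧
    (Λ.Per = {0} ↔ ∀ μ ν : Λ.Path, Λ.peq μ ν → μ = ν) :=
  ⟨⟨fun hap => Λ.per_eq_zero_of_rigid (Λ.rigid_of_aperiodic hlc hap),
    fun hper => Λ.aperiodic_of_per hlc hper⟩,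
   ⟨fun hper => Λ.rigid_of_per hlc hper,
    fun h3 => Λ.per_eq_zero_of_rigid h3⟩⟩
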